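/- arXiv:1505.06983 — 7 statements merged into one kernel-verified Lean document; each statement's English description precedes it below -/
import Mathlib

section
/- Let m ≥ 1 and p be integers, d = gcd(p, m), q = m/d, and let f(x), g(x) ∈ ℤ[x]. Then Coker f(X_m^p) is isomorphic as an abelian group to the direct sum of d copies of Coker f(X_q), and Coker [f(X_m^p) g(X_m^p)] is isomorphic to the direct sum of d copies of Coker [f(X_q) g(X_q)]. -/
open Matrix Polynomial Kronecker

/-- The `m × m` permutation matrix over `ℤ` of the cyclic permutation `(1,2,…,m)`:
its `(i,j)` entry is `1` iff `i ≡ j + 1 (mod m)`. -/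
def cycMat (m : ℕ) : Matrix (Fin m) (Fin m) ℤ :=
  Matrix.of fun i j => if ((j : ℕ) + 1) % m = (i : ℕ) then 1 else 0

/-- `X_m ^ p` for an integer exponent `p`, well defined since `X_m ^ m = 1`. -/
def cycMatZPow (m : ℕ) (p : ℤ) : Matrix (Fin m) (Fin m) ℤ :=
  cycMat m ^ (p % (m : ℤ)).toNat

/-- The cokernel `ℤ^m / A·ℤ^n` of an integer matrix. -/
abbrev coker {m n : Type} [Fintype m] [Fintype n] (A : Matrix m n ℤ) :=
  (m → ℤ) ⧸ LinearMap.range A.mulVecLin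

/- ## Auxiliary arithmetic lemmas -/

private lemma arith_period {t m d q : ℕ} (hmq : m = d * q) (hdt : d ∣ t) (a b : ℕ) :
    (a + b * t) % m = (a + (b % q) * t) % m := by
  obtain ⟨t', rfl⟩ := hdt
  have h : a + b * (d * t') = (a + (b % q) * (d * t')) + m * ((b / q) * t') := by
    rw [hmq]
    conv_lhs => rw [← Nat.div_add_mod b q]
    ring
  rw [h, Nat.add_mul_mod_self_left]

private lemma arith_inj {t m d q : ℕ} (hgcd : d = Nat.gcd t m) (hmq : m = d * q)
    {a a' b b' : ℕ} (ha : a < d) (ha' : a' < d) (hb : b < q) (hb' : b' < q)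
    (h : (a + b * t) % m = (a' + b' * t) % m) : a = a' ∧ b = b' := by
  have hd0 : 0 < d := by omega
  obtain ⟨t', rfl⟩ := (hgcd ▸ Nat.gcd_dvd_left t m : d ∣ t)
  have hdm : d ∣ m := ⟨q, hmq⟩
  have hh : a + b * (d * t') ≡ a' + b' * (d * t') [MOD m] := h
  have haa : a = a' := by
    have h2 := hh.of_dvd hdm
    have e1 : (a + b * (d * t')) % d = a % d := by
      rw [show a + b * (d * t') = a + d * (b * t') by ring, Nat.add_mul_mod_self_left]
    have e2 : (a' + b' * (d * t')) % d = a' % d := by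
      rw [show a' + b' * (d * t') = a' + d * (b' * t') by ring, Nat.add_mul_mod_self_left]
    have h3 : a ≡ a' [MOD d] := by
      unfold Nat.ModEq at h2 ⊢
      rw [e1, e2] at h2
      exact h2
    exact h3.eq_of_lt_of_lt ha ha'
  subst haa
  have h3 : b * (d * t') ≡ b' * (d * t') [MOD m] := hh.add_left_cancel' a
  have h4 : b * t' ≡ b' * t' [MOD q] := by
    have h5 : (d * (b * t')) % (d * q) = (d * (b' * t')) % (d * q) := by
      have := h3
      unfold Nat.ModEq at this
      rw [hmq] at this
      rw [show d * (b * t') = b * (d * t') by ring, show d * (b' * t') = b' * (d * t') by ring]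
      exact this
    rw [Nat.mul_mod_mul_left, Nat.mul_mod_mul_left] at h5
    exact Nat.eq_of_mul_eq_mul_left hd0 h5
  have hco : Nat.gcd q t' = 1 := by
    have : d * 1 = d * Nat.gcd t' q := by
      rw [mul_one, ← Nat.gcd_mul_left, ← hmq, ← hgcd]
    rw [Nat.gcd_comm]
    exact (Nat.eq_of_mul_eq_mul_left hd0 this).symm
  have hbb : b ≡ b' [MOD q] := Nat.ModEq.cancel_right_of_coprime hco h4
  exact ⟨rfl, hbb.eq_of_lt_of_lt hb hb'⟩

private lemma int_gcd_emod (p m : ℤ) : Int.gcd (p % m) m = Int.gcd p m := by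
  apply Nat.dvd_antisymm
  · apply Int.natCast_dvd_natCast.mp
    apply Int.dvd_coe_gcd
    · have : p % m = p - m * (p / m) := Int.emod_def p m
      have h1 : (↑(Int.gcd (p % m) m) : ℤ) ∣ p % m := Int.gcd_dvd_left _ _
      have h2 : (↑(Int.gcd (p % m) m) : ℤ) ∣ m := Int.gcd_dvd_right _ _
      have h3 := dvd_add h1 (h2.mul_right (p / m))
      rwa [Int.emod_add_mul_ediv] at h3
    · exact Int.gcd_dvd_right _ _
  · apply Int.natCast_dvd_natCast.mp
    apply Int.dvd_coe_gcd
    · rw [Int.emod_def]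
      exact dvd_sub (Int.gcd_dvd_left _ _) ((Int.gcd_dvd_right _ _).mul_right _)
    · exact Int.gcd_dvd_right _ _

/- ## Powers of the cyclic matrix -/

private lemma cycMat_pow_apply (m : ℕ) (hm : 0 < m) (t : ℕ) (i j : Fin m) :
    (cycMat m ^ t) i j = if ((j : ℕ) + t) % m = (i : ℕ) then 1 else 0 := by
  induction t generalizing i j with
  | zero =>
    simp only [pow_zero, Matrix.one_apply, Nat.add_zero, Nat.mod_eq_of_lt j.isLt]
    simp [Fin.ext_iff, eq_comm]
  | succ n ih =>
    rw [pow_succ, Matrix.mul_apply]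
    have hjn : ((j : ℕ) + 1) % m < m := Nat.mod_lt _ hm
    have hone : ∀ k : Fin m, cycMat m k j = if k = ⟨((j : ℕ) + 1) % m, hjn⟩ then 1 else 0 := by
      intro k
      simp only [cycMat, Matrix.of_apply, Fin.ext_iff, eq_comm]
    calc (∑ k, (cycMat m ^ n) i k * cycMat m k j)
        = ∑ k, (if k = (⟨((j : ℕ) + 1) % m, hjn⟩ : Fin m) then (cycMat m ^ n) i k else 0) := by
          refine Finset.sum_congr rfl fun k _ => ?_
          rw [hone k]
          split <;> simp
      _ = (cycMat m ^ n) i ⟨((j : ℕ) + 1) % m, hjn⟩ := by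
          rw [Finset.sum_ite_eq' Finset.univ _ _]
          simp
      _ = if ((j : ℕ) + (n + 1)) % m = (i : ℕ) then 1 else 0 := by
          rw [ih]
          congr 1
          rw [Nat.mod_add_mod]
          ring_nf

/- ## Kronecker helper -/

private def kronAlgHom (d q : ℕ) :
    Matrix (Fin q) (Fin q) ℤ →ₐ[ℤ] Matrix (Fin d × Fin q) (Fin d × Fin q) ℤ :=
  RingHom.toIntAlgHom
  { toFun := fun A => (1 : Matrix (Fin d) (Fin d) ℤ) ⊗ₖ A
    map_one' := Matrix.one_kronecker_one
    map_mul' := fun A B => by rw [← Matrix.mul_kronecker_mul, Matrix.one_mul]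
    map_zero' := Matrix.kronecker_zero _
    map_add' := fun A B => Matrix.kronecker_add _ _ _ }

private lemma kronAlgHom_apply (d q : ℕ) (A : Matrix (Fin q) (Fin q) ℤ) :
    kronAlgHom d q A = (1 : Matrix (Fin d) (Fin d) ℤ) ⊗ₖ A := rfl

private lemma one_kron_mulVec {d q : ℕ} {n : Type} [Fintype n]
    (B : Matrix (Fin q) n ℤ) (v : Fin d × n → ℤ) (x : Fin d × Fin q) :
    (((1 : Matrix (Fin d) (Fin d) ℤ) ⊗ₖ B) *ᵥ v) x = (B *ᵥ fun j => v (x.1, j)) x.2 := by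
  obtain ⟨a, b⟩ := x
  simp only [Matrix.mulVec, dotProduct, Fintype.sum_prod_type,
    Matrix.kroneckerMap_apply, Matrix.one_apply, ite_mul, one_mul, zero_mul, mul_ite, mul_zero]
  have h1 : ∀ x : Fin d, (∑ j : n, if a = x then B b j * v (x, j) else 0) =
      if a = x then ∑ j : n, B b j * v (a, j) else 0 := by
    intro x
    by_cases h : a = x
    · subst h; simp
    · simp [h]
  rw [Finset.sum_congr rfl fun x _ => h1 x, Finset.sum_ite_eq]
  simp

/- ## Cokernel of a reindexed Kronecker product -/

private lemma coker_kron {d q : ℕ} {n c R : Type} [Fintype n] [Fintype c] [Fintype R]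
    (B : Matrix (Fin q) n ℤ) (ψ : Fin d × Fin q ≃ R) (e : Fin d × n ≃ c) :
    Nonempty (coker (((1 : Matrix (Fin d) (Fin d) ℤ) ⊗ₖ B).submatrix ψ.symm e.symm) ≃+
      (Fin d → coker B)) := by
  classical
  set M := ((1 : Matrix (Fin d) (Fin d) ℤ) ⊗ₖ B) with hM
  let Φ : (Fin d → Fin q → ℤ) ≃ₗ[ℤ] (R → ℤ) :=
    (LinearEquiv.curry ℤ ℤ (Fin d) (Fin q)).symm.trans (LinearEquiv.funCongrLeft ℤ ℤ ψ.symm)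
  have hΦ : ∀ u : Fin d → Fin q → ℤ, (Φ u : R → ℤ) = fun r => u (ψ.symm r).1 (ψ.symm r).2 :=
    fun u => rfl
  have hmap : Submodule.map (Φ : (Fin d → Fin q → ℤ) →ₗ[ℤ] (R → ℤ))
      (Submodule.pi Set.univ fun _ : Fin d => LinearMap.range B.mulVecLin) =
      LinearMap.range (M.submatrix ψ.symm e.symm).mulVecLin := by
    ext w
    simp only [Submodule.mem_map, Submodule.mem_pi, Set.mem_univ, forall_true_left,
      LinearMap.mem_range, Matrix.mulVecLin_apply]
    constructor
    · rintro ⟨u, hu, rfl⟩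
      choose vv hvv using hu
      refine ⟨(fun x : Fin d × n => vv x.1 x.2) ∘ e.symm, ?_⟩
      rw [Matrix.submatrix_mulVec_equiv]
      funext r
      have hcomp : ((fun x : Fin d × n => vv x.1 x.2) ∘ e.symm) ∘ (e.symm).symm =
          fun x : Fin d × n => vv x.1 x.2 := by
        funext x; simp
      rw [hcomp]
      show (M *ᵥ fun x : Fin d × n => vv x.1 x.2) (ψ.symm r) = Φ u r
      rw [one_kron_mulVec B _ (ψ.symm r), hΦ]
      exact congrFun (hvv (ψ.symm r).1) (ψ.symm r).2
    · rintro ⟨v, rfl⟩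
      refine ⟨fun a => B *ᵥ (fun j => v (e (a, j))), fun a => ⟨fun j => v (e (a, j)), rfl⟩, ?_⟩
      rw [Matrix.submatrix_mulVec_equiv, LinearEquiv.coe_coe, hΦ]
      funext r
      rw [Function.comp_apply, one_kron_mulVec B _ (ψ.symm r)]
      rfl
  exact ⟨((Submodule.Quotient.equiv _ _
    (Φ : (Fin d → Fin q → ℤ) ≃ₗ[ℤ] (R → ℤ)) hmap).symm.trans
    (Submodule.quotientPi _)).toAddEquiv⟩

theorem stmt_1 (m : ℕ) (hm : 1 ≤ m) (p : ℤ) (d q : ℕ)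
    (hd : d = Int.gcd p m) (hq : q = m / d) (f g : Polynomial ℤ) :
    Nonempty (coker (aeval (cycMatZPow m p) f) ≃+ (Fin d → coker (aeval (cycMat q) f))) ∧
    Nonempty (coker (Matrix.fromCols (aeval (cycMatZPow m p) f) (aeval (cycMatZPow m p) g)) ≃+
      (Fin d → coker (Matrix.fromCols (aeval (cycMat q) f) (aeval (cycMat q) g)))) := by
  have hm0 : 0 < m := hm
  set t : ℕ := (p % (m : ℤ)).toNat with ht
  have hmz : (0 : ℤ) < (m : ℤ) := by exact_mod_cast hm0
  have htz : (t : ℤ) = p % (m : ℤ) := Int.toNat_of_nonneg (Int.emod_nonneg p hmz.ne')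
  have hgcd : d = Nat.gcd t m := by
    rw [hd, ← int_gcd_emod p (m : ℤ), ← htz, Int.gcd_natCast_natCast]
  have hdm : d ∣ m := hgcd ▸ Nat.gcd_dvd_right t m
  have hdt : d ∣ t := hgcd ▸ Nat.gcd_dvd_left t m
  have hmq : m = d * q := by rw [hq, Nat.mul_div_cancel' hdm]
  have hd0 : 0 < d := by
    rcases Nat.eq_zero_or_pos d with h | h
    · subst h; simp at hmq; omega
    · exact h
  have hq0 : 0 < q := by
    rcases Nat.eq_zero_or_pos q with h | h
    · subst h; simp at hmq; omega
    · exact h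
  -- the reindexing equivalence
  have hlt : ∀ x : Fin d × Fin q, ((x.1 : ℕ) + (x.2 : ℕ) * t) % m < m :=
    fun _ => Nat.mod_lt _ hm0
  let ψf : Fin d × Fin q → Fin m := fun x => ⟨((x.1 : ℕ) + (x.2 : ℕ) * t) % m, hlt x⟩
  have hinj : Function.Injective ψf := by
    rintro ⟨a, b⟩ ⟨a', b'⟩ hxy
    have h1 : ((a : ℕ) + (b : ℕ) * t) % m = ((a' : ℕ) + (b' : ℕ) * t) % m :=
      congrArg Fin.val hxy
    obtain ⟨e1, e2⟩ := arith_inj hgcd hmq a.isLt a'.isLt b.isLt b'.isLt h1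
    exact Prod.ext (Fin.ext e1) (Fin.ext e2)
  have hbij : Function.Bijective ψf := by
    rw [Fintype.bijective_iff_injective_and_card]
    refine ⟨hinj, ?_⟩
    simp [Fintype.card_prod, ← hmq]
  let ψ : Fin d × Fin q ≃ Fin m := Equiv.ofBijective ψf hbij
  have hψval : ∀ x : Fin d × Fin q, ((ψ x : Fin m) : ℕ) = ((x.1 : ℕ) + (x.2 : ℕ) * t) % m :=
    fun _ => rfl
  -- the key matrix identity
  have hkey : cycMatZPow m p =
      (Matrix.reindexAlgEquiv ℤ ℤ ψ) ((kronAlgHom d q) (cycMat q)) := by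
    have : ∀ x y : Fin d × Fin q,
        cycMatZPow m p (ψ x) (ψ y) = ((1 : Matrix (Fin d) (Fin d) ℤ) ⊗ₖ cycMat q) x y := by
      rintro ⟨a, b⟩ ⟨a', b'⟩
      have hLHS : cycMatZPow m p (ψ (a, b)) (ψ (a', b')) =
          if (((a' : ℕ) + (b' : ℕ) * t) % m + t) % m = ((a : ℕ) + (b : ℕ) * t) % m
          then 1 else 0 := by
        show (cycMat m ^ t) (ψ (a, b)) (ψ (a', b')) = _
        rw [cycMat_pow_apply m hm0 t]
        rw [hψval, hψval]
      rw [hLHS]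
      have hcond : ((((a' : ℕ) + (b' : ℕ) * t) % m + t) % m = ((a : ℕ) + (b : ℕ) * t) % m) ↔
          ((a : ℕ) = (a' : ℕ) ∧ ((b' : ℕ) + 1) % q = (b : ℕ)) := by
        rw [Nat.mod_add_mod]
        rw [show (a' : ℕ) + (b' : ℕ) * t + t = (a' : ℕ) + ((b' : ℕ) + 1) * t by ring]
        rw [arith_period hmq hdt (a' : ℕ) ((b' : ℕ) + 1)]
        constructor
        · intro h
          obtain ⟨e1, e2⟩ := arith_inj hgcd hmq a'.isLt a.isLt
            (Nat.mod_lt _ hq0) b.isLt h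
          exact ⟨e1.symm, e2⟩
        · rintro ⟨e1, e2⟩
          rw [e1, e2]
      have hRHS : ((1 : Matrix (Fin d) (Fin d) ℤ) ⊗ₖ cycMat q) (a, b) (a', b') =
          if (a : ℕ) = (a' : ℕ) ∧ ((b' : ℕ) + 1) % q = (b : ℕ) then 1 else 0 := by
        simp only [Matrix.kroneckerMap_apply, Matrix.one_apply, cycMat, Matrix.of_apply]
        by_cases h1 : a = a' <;> by_cases h2 : ((b' : ℕ) + 1) % q = (b : ℕ) <;>
          simp [h1, h2, Fin.val_eq_val]
      rw [hRHS]
      simp only [hcond]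
    ext i j
    obtain ⟨x, rfl⟩ := ψ.surjective i
    obtain ⟨y, rfl⟩ := ψ.surjective j
    rw [kronAlgHom_apply, Matrix.reindexAlgEquiv_apply, Matrix.reindex_apply,
      Matrix.submatrix_apply, Equiv.symm_apply_apply, Equiv.symm_apply_apply]
    exact this x y
  -- transferring through the algebra maps
  let Ψ : Matrix (Fin q) (Fin q) ℤ →ₐ[ℤ] Matrix (Fin m) (Fin m) ℤ :=
    (Matrix.reindexAlgEquiv ℤ ℤ ψ).toAlgHom.comp (kronAlgHom d q)
  have hkey' : cycMatZPow m p = Ψ (cycMat q) := hkey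
  have haeval : ∀ h : Polynomial ℤ, aeval (cycMatZPow m p) h =
      ((1 : Matrix (Fin d) (Fin d) ℤ) ⊗ₖ (aeval (cycMat q) h)).submatrix ψ.symm ψ.symm := by
    intro h
    rw [hkey', aeval_algHom_apply]
    show (Matrix.reindexAlgEquiv ℤ ℤ ψ) ((kronAlgHom d q) (aeval (cycMat q) h)) = _
    rw [kronAlgHom_apply, Matrix.reindexAlgEquiv_apply, Matrix.reindex_apply]
  constructor
  · rw [haeval f]
    exact coker_kron (aeval (cycMat q) f) ψ ψ
  · rw [haeval f, haeval g]
    let e₂ : Fin d × (Fin q ⊕ Fin q) ≃ Fin m ⊕ Fin m :=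
      (Equiv.prodSumDistrib (Fin d) (Fin q) (Fin q)).trans (Equiv.sumCongr ψ ψ)
    have hcols : Matrix.fromCols
        (((1 : Matrix (Fin d) (Fin d) ℤ) ⊗ₖ (aeval (cycMat q) f)).submatrix ψ.symm ψ.symm)
        (((1 : Matrix (Fin d) (Fin d) ℤ) ⊗ₖ (aeval (cycMat q) g)).submatrix ψ.symm ψ.symm) =
        ((1 : Matrix (Fin d) (Fin d) ℤ) ⊗ₖ
          (Matrix.fromCols (aeval (cycMat q) f) (aeval (cycMat q) g))).submatrix
          ψ.symm e₂.symm := by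
      ext i j
      have he₂l : ∀ j : Fin m, e₂.symm (Sum.inl j) = ((ψ.symm j).1, Sum.inl (ψ.symm j).2) := by
        intro j
        simp [e₂, Equiv.prodSumDistrib]
      have he₂r : ∀ j : Fin m, e₂.symm (Sum.inr j) = ((ψ.symm j).1, Sum.inr (ψ.symm j).2) := by
        intro j
        simp [e₂, Equiv.prodSumDistrib]
      cases j with
      | inl j => simp [Matrix.fromCols, he₂l j]
      | inr j => simp [Matrix.fromCols, he₂r j]
    rw [hcols]
    exact coker_kron (Matrix.fromCols (aeval (cycMat q) f) (aeval (cycMat q) g)) ψ e₂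
end

section
/- Let m, l ≥ 1 and p be integers and d = gcd(p, m). Then Coker (l·(1_m − X_m^p)) ≅ ℤ^d ⊕ (ℤ/lℤ)^{m−d}, and Coker [1_m − X_m^p l·1_m] ≅ (ℤ/lℤ)^d. -/
open Matrix Polynomial

/-- `s_p(A) = 1 - A + A² - ⋯ + (-1)^(p-1) A^(p-1)` for a square integer matrix `A`. -/
def sMat {n : Type} [Fintype n] [DecidableEq n] (p : ℕ) (A : Matrix n n ℤ) :
    Matrix n n ℤ :=
  ∑ i ∈ Finset.range p, ((-1 : ℤ) ^ i) • A ^ i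

namespace Stmt3Aux

open Fin.NatCast
open Fin.CommRing

/-- Sum of the coordinates of `v` over the residue class of `r` modulo `d`. -/
def clsSum (m d : ℕ) (v : Fin m → ℤ) (r : Fin d) : ℤ :=
  ∑ i : Fin m, if (i : ℕ) % d = (r : ℕ) then v i else 0

lemma clsSum_add (m d : ℕ) (v w : Fin m → ℤ) (r : Fin d) :
    clsSum m d (v + w) r = clsSum m d v r + clsSum m d w r := by
  unfold clsSum
  rw [← Finset.sum_add_distrib]
  refine Finset.sum_congr rfl fun i _ => ?_
  by_cases h : (i : ℕ) % d = (r : ℕ) <;> simp [h]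

lemma clsSum_smul (m d : ℕ) (c : ℤ) (v : Fin m → ℤ) (r : Fin d) :
    clsSum m d (c • v) r = c * clsSum m d v r := by
  unfold clsSum
  rw [Finset.mul_sum]
  refine Finset.sum_congr rfl fun i _ => ?_
  by_cases h : (i : ℕ) % d = (r : ℕ) <;> simp [h]

lemma clsSum_sub (m d : ℕ) (v w : Fin m → ℤ) (r : Fin d) :
    clsSum m d (v - w) r = clsSum m d v r - clsSum m d w r := by
  have := clsSum_add m d (v - w) w r
  rw [sub_add_cancel] at this
  omega

lemma clsSum_single (m d : ℕ) (j : Fin m) (c : ℤ) (r : Fin d) :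
    clsSum m d (Pi.single j c) r = if (j : ℕ) % d = (r : ℕ) then c else 0 := by
  unfold clsSum
  rw [Finset.sum_eq_single j]
  · simp
  · intro i _ hij
    rw [Pi.single_apply, if_neg hij]; simp
  · simp

lemma cycMat_mulVec (m : ℕ) [NeZero m] (v : Fin m → ℤ) :
    cycMat m *ᵥ v = fun i => v (i - 1) := by
  funext i
  have key : ∀ j : Fin m, (((j : ℕ) + 1) % m = (i : ℕ)) ↔ j = i - 1 := by
    intro j
    have hb : ((j : ℕ) + 1 % m) % m = ((j : ℕ) + 1) % m := by
      conv_lhs => rw [Nat.add_mod]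
      conv_rhs => rw [Nat.add_mod]
      rw [Nat.mod_mod_of_dvd _ dvd_rfl]
    rw [eq_sub_iff_add_eq, Fin.ext_iff, Fin.add_def, Fin.val_one']
    show _ ↔ ((j : ℕ) + 1 % m) % m = (i : ℕ)
    rw [hb]
  show (∑ j : Fin m, (if ((j : ℕ) + 1) % m = (i : ℕ) then (1:ℤ) else 0) * v j) = v (i - 1)
  rw [Finset.sum_congr rfl (fun j _ => by rw [if_congr (key j) rfl rfl])]
  rw [Finset.sum_eq_single (i - 1)]
  · simp
  · intro b _ hb; simp [hb]
  · simp

lemma pow_mulVec (m : ℕ) [NeZero m] (q : ℕ) (v : Fin m → ℤ) :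
    (cycMat m ^ q) *ᵥ v = fun i => v (i - (q : Fin m)) := by
  induction q generalizing v with
  | zero => simp
  | succ t ih =>
      rw [pow_succ, ← Matrix.mulVec_mulVec, cycMat_mulVec, ih]
      funext i
      congr 1
      push_cast
      ring

lemma M_mulVec (m : ℕ) [NeZero m] (q : ℕ) (v : Fin m → ℤ) :
    (1 - cycMat m ^ q).mulVecLin v = v - fun i => v (i - (q : Fin m)) := by
  rw [mulVecLin_apply, Matrix.sub_mulVec, Matrix.one_mulVec]
  congr 1
  exact pow_mulVec m q v

lemma clsSum_shift (m d q : ℕ) [NeZero m] (hdm : d ∣ m) (hdq : d ∣ q)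
    (v : Fin m → ℤ) (r : Fin d) :
    clsSum m d (fun i => v (i - (q : Fin m))) r = clsSum m d v r := by
  unfold clsSum
  refine Fintype.sum_equiv (Equiv.subRight ((q : ℕ) : Fin m)) _ _ fun i => ?_
  simp only [Equiv.subRight_apply]
  have hval : (((i - (q : Fin m)) : Fin m) : ℕ) % d = (i : ℕ) % d := by
    rw [Fin.sub_def]
    have hq' : d ∣ (m - (((q : ℕ) : Fin m) : ℕ)) := by
      have h1 : (((q : ℕ) : Fin m) : ℕ) = q % m := Fin.val_natCast q m
      rw [h1]
      have : d ∣ q % m := (Nat.dvd_mod_iff hdm).mpr hdq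
      exact Nat.dvd_sub hdm this
    obtain ⟨c, hc⟩ := hq'
    show ((m - (((q : ℕ) : Fin m) : ℕ)) + (i : ℕ)) % m % d = _
    rw [Nat.mod_mod_of_dvd _ hdm, hc, Nat.mul_add_mod]
  rw [hval]

lemma exists_shift (m q d : ℕ) (hm : 0 < m) (hd : d = Nat.gcd q m) (i : ℕ) :
    ∃ t : ℕ, (i + t * q) % m = i % d := by
  have hd0 : 0 < d := hd ▸ Nat.gcd_pos_of_pos_right q hm
  have hdm : d ∣ m := hd ▸ Nat.gcd_dvd_right q m
  have hdlem : d ≤ m := Nat.le_of_dvd hm hdm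
  set a := Int.gcdA (q : ℤ) (m : ℤ) with ha
  set bb := Int.gcdB (q : ℤ) (m : ℤ) with hbb
  have hb : (d : ℤ) = q * a + m * bb := by
    rw [hd, ← Int.gcd_natCast_natCast]
    exact Int.gcd_eq_gcd_ab (q : ℤ) (m : ℤ)
  set k : ℕ := i / d with hk
  have hik : (i : ℤ) = (d : ℤ) * k + ((i % d : ℕ) : ℤ) := by
    exact_mod_cast (Nat.div_add_mod i d).symm
  refine ⟨((-a * k) % (m : ℤ)).toNat, ?_⟩
  have ht : ((((-a * k) % (m : ℤ)).toNat : ℤ)) = (-a * k) % (m : ℤ) :=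
    Int.toNat_of_nonneg (Int.emod_nonneg _ (by exact_mod_cast hm.ne'))
  have c1 : (-a * k) % (m:ℤ) ≡ -a * k [ZMOD (m:ℤ)] := Int.emod_emod_of_dvd _ dvd_rfl
  have c2 : (i:ℤ) + ((-a * k) % (m:ℤ)) * q ≡ (i:ℤ) + (-a * k) * q [ZMOD (m:ℤ)] :=
    Int.ModEq.add_left _ (c1.mul_right q)
  have heq : (i:ℤ) + (-a * k) * q = ((i % d : ℕ) : ℤ) + ((k:ℤ) * bb) * m := by
    linear_combination hik + (k:ℤ) * hb
  have c3 : ((i % d : ℕ) : ℤ) + ((k:ℤ) * bb) * m ≡ ((i % d : ℕ) : ℤ) [ZMOD (m:ℤ)] :=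
    Int.add_mul_emod_self_right _ _ _
  have call : ((i:ℤ) + ((-a * k) % (m:ℤ)) * q) % m = ((i % d : ℕ) : ℤ) % m :=
    c2.trans (heq ▸ c3)
  have hfin : ((i % d : ℕ) : ℤ) % m = ((i % d : ℕ) : ℤ) := by
    refine Int.emod_eq_of_lt (by positivity) ?_
    exact_mod_cast lt_of_lt_of_le (Nat.mod_lt i hd0) hdlem
  have key : (((i + ((-a * k) % (m : ℤ)).toNat * q : ℕ) : ℤ)) % m = ((i % d : ℕ) : ℤ) := by
    push_cast [ht]
    rw [call, hfin]; exact Int.natCast_mod i d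
  rw [← Int.natCast_mod] at key
  exact_mod_cast key

lemma spanK (m q d : ℕ) [NeZero m] (hd : d = Nat.gcd q m) (u : Fin m → ℤ)
    (hu : ∀ r : Fin d, clsSum m d u r = 0) :
    u ∈ LinearMap.range (1 - cycMat m ^ q).mulVecLin := by
  have hm : 0 < m := Nat.pos_of_ne_zero (NeZero.ne m)
  have hd0 : 0 < d := hd ▸ Nat.gcd_pos_of_pos_right q hm
  have hdm : d ∣ m := hd ▸ Nat.gcd_dvd_right q m
  have hdlem : d ≤ m := Nat.le_of_dvd hm hdm
  set W := LinearMap.range (1 - cycMat m ^ q).mulVecLin with hW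
  set b : Fin m → Fin m := fun i =>
    ⟨(i : ℕ) % d, lt_of_lt_of_le (Nat.mod_lt _ hd0) hdlem⟩ with hbdef
  have hcol : ∀ j : Fin m, (Pi.single j 1 - Pi.single (j + (q : Fin m)) 1) ∈ W := by
    intro j
    refine ⟨Pi.single j 1, ?_⟩
    rw [M_mulVec]
    funext i
    simp only [Pi.sub_apply, Pi.single_apply]
    congr 1
    by_cases h : i - (q : Fin m) = j
    · rw [if_pos h, if_pos (by rw [← h]; ring)]
    · rw [if_neg h, if_neg (by intro hc; exact h (by rw [hc]; ring))]
  have hstep : ∀ (t : ℕ) (j : Fin m),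
      (Pi.single j 1 - Pi.single (j + ((t * q : ℕ) : Fin m)) 1) ∈ W := by
    intro t
    induction t with
    | zero => intro j; simp
    | succ s ih =>
        intro j
        have h1 := ih j
        have h2 := hcol (j + ((s * q : ℕ) : Fin m))
        have h3 := W.add_mem h1 h2
        rw [sub_add_sub_cancel] at h3
        have harg : j + ((s * q : ℕ) : Fin m) + (q : Fin m)
            = j + (((s + 1) * q : ℕ) : Fin m) := by
          push_cast
          ring
        rwa [harg] at h3
  have hbase : ∀ i : Fin m, (Pi.single i 1 - Pi.single (b i) 1) ∈ W := by
    intro i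
    obtain ⟨t, ht⟩ := exists_shift m q d hm hd (i : ℕ)
    have harg : i + ((t * q : ℕ) : Fin m) = b i := by
      rw [Fin.ext_iff, Fin.add_def, Fin.val_natCast]
      show ((i : ℕ) + t * q % m) % m = (i : ℕ) % d
      conv_lhs => rw [Nat.add_mod]
      rw [Nat.mod_mod_of_dvd _ dvd_rfl, ← Nat.add_mod, ht]
    have := hstep t i
    rwa [harg] at this
  have hS : u = ∑ i : Fin m, u i • (Pi.single i 1 - Pi.single (b i) 1) := by
    funext j
    rw [Finset.sum_apply]
    have hterm : ∀ i : Fin m,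
        (u i • ((Pi.single i (1:ℤ) - Pi.single (b i) 1 : Fin m → ℤ))) j
          = (if j = i then u i else 0) - (if j = b i then u i else 0) := by
      intro i
      simp only [Pi.smul_apply, Pi.sub_apply, Pi.single_apply, smul_eq_mul,
        mul_sub, mul_ite, mul_one, mul_zero]
    rw [Finset.sum_congr rfl fun i _ => hterm i, Finset.sum_sub_distrib]
    rw [Finset.sum_ite_eq Finset.univ j u]
    simp only [Finset.mem_univ, if_true]
    have hzero : (∑ i : Fin m, if j = b i then u i else 0) = 0 := by
      by_cases hj : (j : ℕ) < d
      · have hcond : ∀ i : Fin m, (j = b i) ↔ ((i : ℕ) % d = (j : ℕ)) := by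
          intro i
          rw [Fin.ext_iff]
          exact eq_comm
        rw [Finset.sum_congr rfl fun i _ => if_congr (hcond i) rfl rfl]
        have hu' := hu ⟨(j : ℕ), hj⟩
        unfold clsSum at hu'
        exact hu'
      · refine Finset.sum_eq_zero fun i _ => ?_
        rw [if_neg]
        intro hc
        apply hj
        have hval : (j : ℕ) = (i : ℕ) % d := by rw [hc]
        rw [hval]
        exact Nat.mod_lt _ hd0
    rw [hzero, sub_zero]
  rw [hS]
  exact Submodule.sum_mem W fun i _ => Submodule.smul_mem W (u i) (hbase i)

lemma clsSum_sum (m d : ℕ) {α : Type} (t : Finset α) (f : α → (Fin m → ℤ)) (r : Fin d) :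
    clsSum m d (∑ a ∈ t, f a) r = ∑ a ∈ t, clsSum m d (f a) r := by
  unfold clsSum
  rw [Finset.sum_comm]
  refine Finset.sum_congr rfl fun i _ => ?_
  rw [Finset.sum_apply]
  by_cases h : (i : ℕ) % d = (r : ℕ) <;> simp [h]

lemma clsSum_combo (m d : ℕ) (hdlem : d ≤ m) (x : Fin d → ℤ) (r : Fin d) :
    clsSum m d (∑ s : Fin d, x s •
      (Pi.single (⟨(s : ℕ), lt_of_lt_of_le s.isLt hdlem⟩ : Fin m) (1:ℤ) : Fin m → ℤ)) r
      = x r := by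
  rw [clsSum_sum]
  have hterm : ∀ s : Fin d, clsSum m d (x s •
      (Pi.single (⟨(s : ℕ), lt_of_lt_of_le s.isLt hdlem⟩ : Fin m) (1:ℤ) : Fin m → ℤ)) r
      = if s = r then x s else 0 := by
    intro s
    rw [clsSum_smul, clsSum_single]
    have : ((s : ℕ) % d = (r : ℕ)) ↔ s = r := by
      rw [Nat.mod_eq_of_lt s.isLt, Fin.ext_iff]
    rw [if_congr this rfl rfl]
    by_cases h : s = r <;> simp [h]
  rw [Finset.sum_congr rfl fun s _ => hterm s, Finset.sum_ite_eq' Finset.univ r x]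
  simp
/-- The test map for the first cokernel. -/
def Fmap (m d l : ℕ) : (Fin m → ℤ) →ₗ[ℤ] (Fin d → ℤ) × (Fin (m - d) → ZMod l) where
  toFun v := (fun r => clsSum m d v r,
    fun s => ((v ⟨d + (s : ℕ), by omega⟩ : ℤ) : ZMod l))
  map_add' v w := by
    refine Prod.ext ?_ ?_
    · funext r; exact clsSum_add m d v w r
    · funext s
      show (((v _ + w _ : ℤ)) : ZMod l) = ((v _ : ℤ) : ZMod l) + ((w _ : ℤ) : ZMod l)
      push_cast
      ring
  map_smul' c v := by
    refine Prod.ext ?_ ?_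
    · funext r; exact clsSum_smul m d c v r
    · funext s
      show (((c * v _ : ℤ)) : ZMod l) = c • ((v _ : ℤ) : ZMod l)
      push_cast
      rw [zsmul_eq_mul]

/-- The test map for the second cokernel. -/
def Gmap (m d l : ℕ) : (Fin m → ℤ) →ₗ[ℤ] (Fin d → ZMod l) where
  toFun v := fun r => ((clsSum m d v r : ℤ) : ZMod l)
  map_add' v w := by
    funext r
    show ((clsSum m d (v + w) r : ℤ) : ZMod l) = _
    rw [clsSum_add]
    push_cast
    rfl
  map_smul' c v := by
    funext r
    show ((clsSum m d (c • v) r : ℤ) : ZMod l) = c • ((clsSum m d v r : ℤ) : ZMod l)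
    rw [clsSum_smul]
    push_cast
    rw [zsmul_eq_mul]

lemma clsSum_M (m d q : ℕ) [NeZero m] (hdm : d ∣ m) (hdq : d ∣ q)
    (x : Fin m → ℤ) (r : Fin d) :
    clsSum m d ((1 - cycMat m ^ q).mulVecLin x) r = 0 := by
  rw [M_mulVec, clsSum_sub, clsSum_shift m d q hdm hdq, sub_self]

lemma ker1 (m l q d : ℕ) [NeZero m] (hl : 0 < l) (hd : d = Nat.gcd q m) :
    LinearMap.range ((l : ℤ) • (1 - cycMat m ^ q)).mulVecLin
      = LinearMap.ker (Fmap m d l) := by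
  have hm : 0 < m := Nat.pos_of_ne_zero (NeZero.ne m)
  have hd0 : 0 < d := hd ▸ Nat.gcd_pos_of_pos_right q hm
  have hdm : d ∣ m := hd ▸ Nat.gcd_dvd_right q m
  have hdq : d ∣ q := hd ▸ Nat.gcd_dvd_left q m
  have hdlem : d ≤ m := Nat.le_of_dvd hm hdm
  have hsmul : ∀ x : Fin m → ℤ, ((l : ℤ) • (1 - cycMat m ^ q)).mulVecLin x
      = (l : ℤ) • ((1 - cycMat m ^ q).mulVecLin x) := by
    intro x
    rw [mulVecLin_apply, mulVecLin_apply, smul_mulVec]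
  apply le_antisymm
  · rintro _ ⟨x, rfl⟩
    rw [LinearMap.mem_ker, hsmul, LinearMap.map_smul]
    refine Prod.ext ?_ ?_
    · show (l : ℤ) • (fun r => clsSum m d ((1 - cycMat m ^ q).mulVecLin x) r) = 0
      funext r
      show (l : ℤ) * clsSum m d ((1 - cycMat m ^ q).mulVecLin x) r = 0
      rw [clsSum_M m d q hdm hdq, mul_zero]
    · show (l : ℤ) • (fun s : Fin (m - d) =>
        (((1 - cycMat m ^ q).mulVecLin x ⟨d + (s : ℕ), by omega⟩ : ℤ) : ZMod l)) = 0
      funext s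
      simp only [Pi.smul_apply, zsmul_eq_mul, Pi.zero_apply]
      rw [show ((l : ℤ) : ZMod l) = 0 by exact_mod_cast ZMod.natCast_self l, zero_mul]
  · intro v hv
    rw [LinearMap.mem_ker] at hv
    have h1 : ∀ r : Fin d, clsSum m d v r = 0 := by
      intro r
      have := congrFun (congrArg Prod.fst hv) r
      exact this
    have hsnd : ∀ s : Fin (m - d), ((v ⟨d + (s : ℕ), by omega⟩ : ℤ) : ZMod l) = 0 :=
      fun s => congrFun (congrArg Prod.snd hv) s
    have h2 : ∀ i : Fin m, d ≤ (i : ℕ) → (l : ℤ) ∣ v i := by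
      intro i hi
      have hs' : ((v ⟨d + (((⟨(i : ℕ) - d, by omega⟩ : Fin (m - d))) : ℕ), by omega⟩ : ℤ) : ZMod l) = 0 :=
        hsnd ⟨(i : ℕ) - d, by omega⟩
      have hidx : (⟨d + (((⟨(i : ℕ) - d, by omega⟩ : Fin (m - d))) : ℕ), by omega⟩ : Fin m) = i := by
        rw [Fin.ext_iff]
        show d + ((i : ℕ) - d) = (i : ℕ)
        omega
      rw [hidx] at hs'
      exact (ZMod.intCast_zmod_eq_zero_iff_dvd _ l).mp hs'
    have hdvd : ∀ i : Fin m, (l : ℤ) ∣ v i := by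
      intro i
      by_cases hi : (i : ℕ) < d
      · set r : Fin d := ⟨(i : ℕ), hi⟩ with hr
        have hsplit : clsSum m d v r
            = v i + clsSum m d (v - Pi.single i (v i)) r := by
          rw [clsSum_sub, clsSum_single]
          rw [if_pos (by rw [Nat.mod_eq_of_lt hi])]
          ring
        have hrest : (l : ℤ) ∣ clsSum m d (v - Pi.single i (v i)) r := by
          unfold clsSum
          refine Finset.dvd_sum fun j _ => ?_
          by_cases hcase : (j : ℕ) % d = (r : ℕ)
          · rw [if_pos hcase]
            by_cases hji : j = i
            · subst hji
              simp
            · rw [Pi.sub_apply, Pi.single_apply, if_neg hji, sub_zero]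
              refine h2 j ?_
              by_contra hlt
              push_neg at hlt
              apply hji
              rw [Fin.ext_iff]
              rw [Nat.mod_eq_of_lt hlt] at hcase
              exact hcase
          · rw [if_neg hcase]
            exact dvd_zero _
        have hz := h1 r
        rw [hsplit] at hz
        have hvi : v i = -clsSum m d (v - Pi.single i (v i)) r := by omega
        rw [hvi]
        exact dvd_neg.mpr hrest
      · exact h2 i (by omega)
    set w : Fin m → ℤ := fun i => v i / (l : ℤ) with hwdef
    have hvw : v = (l : ℤ) • w := by
      funext i
      rw [Pi.smul_apply, hwdef, smul_eq_mul]
      exact (Int.mul_ediv_cancel' (hdvd i)).symm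
    have hl' : ((l : ℤ)) ≠ 0 := by exact_mod_cast hl.ne'
    have hw : ∀ r : Fin d, clsSum m d w r = 0 := by
      intro r
      have := h1 r
      rw [hvw, clsSum_smul] at this
      exact (mul_eq_zero.mp this).resolve_left hl'
    obtain ⟨x, hx⟩ := spanK m q d hd w hw
    exact ⟨x, by rw [hsmul, hx, ← hvw]⟩

lemma sum_single_hi (m d : ℕ) (hdlem : d ≤ m) (x : Fin d → ℤ) (i : Fin m)
    (hi : d ≤ (i : ℕ)) :
    (∑ s : Fin d, x s •
      (Pi.single (⟨(s : ℕ), lt_of_lt_of_le s.isLt hdlem⟩ : Fin m) (1:ℤ) : Fin m → ℤ)) i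
      = 0 := by
  rw [Finset.sum_apply]
  refine Finset.sum_eq_zero fun s _ => ?_
  simp only [Pi.smul_apply, Pi.single_apply, smul_eq_mul]
  rw [if_neg, mul_zero]
  intro hc
  rw [Fin.ext_iff] at hc
  simp only at hc
  omega

lemma Fsurj (m l d : ℕ) (hd0 : 0 < d) (hdlem : d ≤ m) (hl : 0 < l) :
    Function.Surjective (Fmap m d l) := by
  haveI : NeZero l := ⟨hl.ne'⟩
  rintro ⟨a, c⟩
  set w : Fin m → ℤ := fun i =>
    if h : (i : ℕ) < d then 0 else ((c ⟨(i : ℕ) - d, by omega⟩).val : ℤ) with hw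
  set a₀ : Fin d → ℤ := fun r => clsSum m d w r with ha₀
  set v : Fin m → ℤ := w + ∑ s : Fin d, (a s - a₀ s) •
    (Pi.single (⟨(s : ℕ), lt_of_lt_of_le s.isLt hdlem⟩ : Fin m) (1:ℤ) : Fin m → ℤ) with hv
  refine ⟨v, ?_⟩
  refine Prod.ext ?_ ?_
  · show (fun r => clsSum m d v r) = a
    funext r
    rw [hv, clsSum_add, clsSum_combo m d hdlem]
    show a₀ r + (a r - a₀ r) = a r
    ring
  · show (fun s : Fin (m - d) => ((v ⟨d + (s : ℕ), by omega⟩ : ℤ) : ZMod l)) = c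
    funext s
    have hidx : d ≤ ((⟨d + (s : ℕ), by omega⟩ : Fin m) : ℕ) := by simp
    have h1 : v ⟨d + (s : ℕ), by omega⟩ = w ⟨d + (s : ℕ), by omega⟩ := by
      rw [hv, Pi.add_apply, sum_single_hi m d hdlem _ _ hidx, add_zero]
    rw [h1, hw]
    simp only [dif_neg (by omega : ¬ (d + (s : ℕ) < d))]
    have : (⟨d + (s : ℕ) - d, by omega⟩ : Fin (m - d)) = s := by
      rw [Fin.ext_iff]; simp
    rw [this]
    push_cast
    exact ZMod.natCast_rightInverse (c s)

lemma ker2 (m l q d : ℕ) [NeZero m] (hl : 0 < l) (hd : d = Nat.gcd q m) :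
    LinearMap.range (Matrix.fromCols (1 - cycMat m ^ q)
      ((l : ℤ) • (1 : Matrix (Fin m) (Fin m) ℤ))).mulVecLin
      = LinearMap.ker (Gmap m d l) := by
  have hm : 0 < m := Nat.pos_of_ne_zero (NeZero.ne m)
  have hd0 : 0 < d := hd ▸ Nat.gcd_pos_of_pos_right q hm
  have hdm : d ∣ m := hd ▸ Nat.gcd_dvd_right q m
  have hdq : d ∣ q := hd ▸ Nat.gcd_dvd_left q m
  have hdlem : d ≤ m := Nat.le_of_dvd hm hdm
  have hl' : ((l : ℤ)) ≠ 0 := by exact_mod_cast hl.ne'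
  have hcols : ∀ y : (Fin m ⊕ Fin m) → ℤ,
      (Matrix.fromCols (1 - cycMat m ^ q)
        ((l : ℤ) • (1 : Matrix (Fin m) (Fin m) ℤ))).mulVecLin y
      = (1 - cycMat m ^ q).mulVecLin (y ∘ Sum.inl) + (l : ℤ) • (y ∘ Sum.inr) := by
    intro y
    rw [mulVecLin_apply, ← Sum.elim_comp_inl_inr y, Matrix.fromCols_mulVec_sumElim]
    rw [mulVecLin_apply, smul_mulVec, Matrix.one_mulVec]
    simp [Sum.elim_comp_inl_inr]
  apply le_antisymm
  · rintro _ ⟨y, rfl⟩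
    rw [LinearMap.mem_ker, hcols, map_add]
    have hz1 : Gmap m d l ((1 - cycMat m ^ q).mulVecLin (y ∘ Sum.inl)) = 0 := by
      funext r
      show ((clsSum m d _ r : ℤ) : ZMod l) = 0
      rw [clsSum_M m d q hdm hdq]
      simp
    have hz2 : Gmap m d l ((l : ℤ) • (y ∘ Sum.inr)) = 0 := by
      funext r
      show ((clsSum m d _ r : ℤ) : ZMod l) = 0
      rw [clsSum_smul]
      push_cast
      rw [ZMod.natCast_self l, zero_mul]
    rw [hz1, hz2, add_zero]
  · intro v hv
    rw [LinearMap.mem_ker] at hv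
    have h1 : ∀ r : Fin d, (l : ℤ) ∣ clsSum m d v r := by
      intro r
      have := congrFun hv r
      exact_mod_cast (ZMod.intCast_zmod_eq_zero_iff_dvd _ l).mp this
    set corr : Fin m → ℤ := ∑ s : Fin d, (clsSum m d v s / (l : ℤ)) •
      (Pi.single (⟨(s : ℕ), lt_of_lt_of_le s.isLt hdlem⟩ : Fin m) (1:ℤ) : Fin m → ℤ)
      with hcorr
    have hcorr_cls : ∀ r : Fin d, clsSum m d corr r = clsSum m d v r / (l : ℤ) := by
      intro r
      rw [hcorr]
      exact clsSum_combo m d hdlem _ r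
    have hu : ∀ r : Fin d, clsSum m d (v - (l : ℤ) • corr) r = 0 := by
      intro r
      rw [clsSum_sub, clsSum_smul, hcorr_cls]
      rw [Int.mul_ediv_cancel' (h1 r), sub_self]
    obtain ⟨x, hx⟩ := spanK m q d hd _ hu
    refine ⟨Sum.elim x corr, ?_⟩
    rw [hcols]
    have hinl : (Sum.elim x corr) ∘ Sum.inl = x := rfl
    have hinr : (Sum.elim x corr) ∘ Sum.inr = corr := rfl
    rw [hinl, hinr, hx]
    exact sub_add_cancel v ((l : ℤ) • corr)

lemma Gsurj (m l d : ℕ) (hd0 : 0 < d) (hdlem : d ≤ m) (hl : 0 < l) :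
    Function.Surjective (Gmap m d l) := by
  haveI : NeZero l := ⟨hl.ne'⟩
  intro a
  refine ⟨∑ s : Fin d, ((a s).val : ℤ) •
    (Pi.single (⟨(s : ℕ), lt_of_lt_of_le s.isLt hdlem⟩ : Fin m) (1:ℤ) : Fin m → ℤ), ?_⟩
  funext r
  show ((clsSum m d _ r : ℤ) : ZMod l) = a r
  rw [clsSum_combo m d hdlem]
  push_cast
  exact ZMod.natCast_rightInverse (a r)

lemma gcd_toNat (p : ℤ) (m : ℕ) (hm : 0 < m) :
    Int.gcd p m = Nat.gcd ((p % (m : ℤ)).toNat) m := by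
  have hm' : (m : ℤ) ≠ 0 := by exact_mod_cast hm.ne'
  have ht : (((p % (m : ℤ)).toNat : ℤ)) = p % (m : ℤ) :=
    Int.toNat_of_nonneg (Int.emod_nonneg _ hm')
  rw [← Int.gcd_natCast_natCast, ht]
  have hdef : p % (m : ℤ) = p - (m : ℤ) * (p / (m : ℤ)) := Int.emod_def p (m : ℤ)
  apply Nat.dvd_antisymm
  · rw [← Int.natCast_dvd_natCast]
    refine Int.dvd_coe_gcd ?_ (Int.gcd_dvd_right _ _)
    have h1 : (↑(Int.gcd p (m:ℤ)) : ℤ) ∣ p := Int.gcd_dvd_left _ _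
    have h2 : (↑(Int.gcd p (m:ℤ)) : ℤ) ∣ (m:ℤ) := Int.gcd_dvd_right _ _
    rw [hdef]
    exact dvd_sub h1 (h2.mul_right _)
  · rw [← Int.natCast_dvd_natCast]
    refine Int.dvd_coe_gcd ?_ (Int.gcd_dvd_right _ _)
    have h1 : (↑(Int.gcd (p % (m:ℤ)) (m:ℤ)) : ℤ) ∣ p % (m:ℤ) := Int.gcd_dvd_left _ _
    have h2 : (↑(Int.gcd (p % (m:ℤ)) (m:ℤ)) : ℤ) ∣ (m:ℤ) := Int.gcd_dvd_right _ _
    have : p = p % (m:ℤ) + (m:ℤ) * (p / (m:ℤ)) := by rw [hdef]; ring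
    have h3 := dvd_add h1 (h2.mul_right (p / (m:ℤ)))
    rwa [← this] at h3

end Stmt3Aux

theorem stmt_3 (m l : ℕ) (hm : 1 ≤ m) (hl : 1 ≤ l) (p : ℤ) (d : ℕ)
    (hd : d = Int.gcd p m) :
    Nonempty (coker ((l : ℤ) • (1 - cycMatZPow m p)) ≃+
      ((Fin d → ℤ) × (Fin (m - d) → ZMod l))) ∧
    Nonempty (coker (Matrix.fromCols (1 - cycMatZPow m p)
      ((l : ℤ) • (1 : Matrix (Fin m) (Fin m) ℤ))) ≃+ (Fin d → ZMod l)) := by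
  haveI : NeZero m := ⟨by omega⟩
  set q : ℕ := (p % (m : ℤ)).toNat with hq
  have hdq : d = Nat.gcd q m := by rw [hd, Stmt3Aux.gcd_toNat p m hm]
  have hd0 : 0 < d := hdq ▸ Nat.gcd_pos_of_pos_right q hm
  have hdlem : d ≤ m := hdq ▸ Nat.le_of_dvd hm (Nat.gcd_dvd_right q m)
  have hzp : cycMatZPow m p = cycMat m ^ q := rfl
  constructor
  · refine ⟨((Submodule.quotEquivOfEq _ _ ?_).trans
      (LinearMap.quotKerEquivOfSurjective _ (Stmt3Aux.Fsurj m l d hd0 hdlem hl))).toAddEquiv⟩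
    rw [hzp]
    exact Stmt3Aux.ker1 m l q d hl hdq
  · refine ⟨((Submodule.quotEquivOfEq _ _ ?_).trans
      (LinearMap.quotKerEquivOfSurjective _ (Stmt3Aux.Gsurj m l d hd0 hdlem hl))).toAddEquiv⟩
    rw [hzp]
    exact Stmt3Aux.ker2 m l q d hl hdq
end

section
/- Let m ≥ 1 and p be integers, d = gcd(p, m) and q = m/d. Then Coker (1_m + X_m^p) ≅ (ℤ/2ℤ)^d if q is odd, and Coker (1_m + X_m^p) ≅ ℤ^d if q is even. -/
open Matrix Polynomial

namespace Stmt4Aux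


def E (m t : ℕ) (hm : 0 < m) (c k : ℕ) : Fin m := ⟨(c + k * t) % m, Nat.mod_lt _ hm⟩

def rot (m t : ℕ) (hm : 0 < m) (ht : t ≤ m) : Equiv (Fin m) (Fin m) where
  toFun i := ⟨((i : ℕ) + t) % m, Nat.mod_lt _ hm⟩
  invFun i := ⟨((i : ℕ) + (m - t)) % m, Nat.mod_lt _ hm⟩
  left_inv i := by
    ext
    show (((i:ℕ) + t) % m + (m - t)) % m = i
    rw [Nat.mod_add_mod, add_assoc, Nat.add_sub_cancel' ht, Nat.add_mod_right,
      Nat.mod_eq_of_lt i.isLt]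
  right_inv i := by
    ext
    show (((i:ℕ) + (m - t)) % m + t) % m = i
    rw [Nat.mod_add_mod, add_assoc, Nat.sub_add_cancel ht, Nat.add_mod_right,
      Nat.mod_eq_of_lt i.isLt]

lemma rot_E (m t : ℕ) (hm : 0 < m) (ht : t ≤ m) (c k : ℕ) :
    rot m t hm ht (E m t hm c k) = E m t hm c (k + 1) := by
  ext
  show ((c + k * t) % m + t) % m = (c + (k + 1) * t) % m
  rw [Nat.mod_add_mod]
  congr 1
  ring

lemma E_period (m t q : ℕ) (hm : 0 < m) (hdvd : m ∣ q * t) (c k : ℕ) :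
    E m t hm c (k + q) = E m t hm c k := by
  obtain ⟨u, hu⟩ := hdvd
  ext
  show (c + (k + q) * t) % m = (c + k * t) % m
  have : c + (k + q) * t = c + k * t + m * u := by rw [← hu]; ring
  rw [this, Nat.add_mul_mod_self_left]

lemma cycMat_pow_apply (m : ℕ) (hm : 0 < m) (s : ℕ) (i j : Fin m) :
    (cycMat m ^ s) i j = if ((j : ℕ) + s) % m = (i : ℕ) then 1 else 0 := by
  induction s generalizing i j with
  | zero =>
    simp [Matrix.one_apply, Nat.mod_eq_of_lt j.isLt, Fin.ext_iff, eq_comm]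
  | succ s ih =>
    rw [pow_succ, Matrix.mul_apply]
    set j' : Fin m := ⟨((j : ℕ) + 1) % m, Nat.mod_lt _ hm⟩ with hj'
    have hcyc : ∀ k : Fin m, cycMat m k j = if k = j' then 1 else 0 := by
      intro k
      show (if ((j : ℕ) + 1) % m = (k : ℕ) then (1:ℤ) else 0) = _
      simp [Fin.ext_iff, hj', eq_comm]
    simp only [hcyc, mul_ite, mul_one, mul_zero]
    rw [Finset.sum_ite_eq' Finset.univ j' (fun k => (cycMat m ^ s) i k)]
    simp only [Finset.mem_univ, if_true]
    rw [ih]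
    have : ((j' : ℕ) + s) % m = ((j : ℕ) + (s+1)) % m := by
      show (((j : ℕ) + 1) % m + s) % m = _
      rw [Nat.mod_add_mod]
      congr 1
      ring
    rw [this]

lemma mulVec_rot (m t : ℕ) (hm : 0 < m) (ht : t ≤ m) (w : Fin m → ℤ) (i : Fin m) :
    ((cycMat m ^ t).mulVec w) i = w ((rot m t hm ht).symm i) := by
  unfold Matrix.mulVec dotProduct
  have h : ∀ j : Fin m, (cycMat m ^ t) i j * w j
      = if j = (rot m t hm ht).symm i then w j else 0 := by
    intro j
    rw [cycMat_pow_apply m hm t i j]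
    have : (((j : ℕ) + t) % m = (i : ℕ)) ↔ (rot m t hm ht j = i) := by
      constructor
      · intro h; ext; exact h
      · intro h; exact congrArg Fin.val h
    by_cases hc : ((j : ℕ) + t) % m = (i : ℕ)
    · rw [if_pos hc, one_mul, if_pos]
      rw [← Equiv.apply_eq_iff_eq_symm_apply]
      exact this.mp hc
    · rw [if_neg hc, zero_mul, if_neg]
      intro hj
      exact hc (this.mpr (((Equiv.apply_eq_iff_eq_symm_apply _).mpr hj)))
  rw [Finset.sum_congr rfl (fun j _ => h j)]
  rw [Finset.sum_ite_eq' Finset.univ _ w]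
  simp



lemma equiv_of {n : ℕ} (A : Matrix (Fin n) (Fin n) ℤ) {M : Type} [AddCommGroup M] [Module ℤ M]
    (φ : (Fin n → ℤ) →ₗ[ℤ] M) (h1 : ∀ w, φ (A.mulVec w) = 0) (h2 : Function.Surjective φ)
    (h3 : ∀ v, φ v = 0 → ∃ w, A.mulVec w = v) : Nonempty (coker A ≃+ M) := by
  have hle : LinearMap.range A.mulVecLin ≤ LinearMap.ker φ := by
    rintro x ⟨w, rfl⟩
    simp only [LinearMap.mem_ker, Matrix.mulVecLin_apply]
    exact h1 w
  let ψ := Submodule.liftQ _ φ hle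
  have hinj : Function.Injective ψ := by
    rw [← LinearMap.ker_eq_bot]
    apply Submodule.ker_liftQ_eq_bot
    intro v hv
    obtain ⟨w, hw⟩ := h3 v (LinearMap.mem_ker.mp hv)
    exact ⟨w, by simp [Matrix.mulVecLin_apply, hw]⟩
  have hsurj : Function.Surjective ψ := by
    intro u
    obtain ⟨v, hv⟩ := h2 u
    exact ⟨Submodule.Quotient.mk v, by rwa [Submodule.liftQ_apply]⟩
  exact ⟨(LinearEquiv.ofBijective ψ ⟨hinj, hsurj⟩).toAddEquiv⟩

lemma gcd_emod_left (a b : ℤ) : Int.gcd (a % b) b = Int.gcd a b := by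
  apply Nat.dvd_antisymm
  · rw [← Int.natCast_dvd_natCast]
    refine Int.dvd_coe_gcd ?_ (Int.gcd_dvd_right _ _)
    have h : a % b + b * (a / b) = a := Int.emod_add_mul_ediv a b
    calc (Int.gcd (a % b) b : ℤ) ∣ a % b + b * (a / b) :=
          dvd_add (Int.gcd_dvd_left _ _) (Dvd.dvd.mul_right (Int.gcd_dvd_right _ _) _)
      _ = a := h
  · rw [← Int.natCast_dvd_natCast]
    refine Int.dvd_coe_gcd ?_ (Int.gcd_dvd_right _ _)
    have h : a % b = a - b * (a / b) := Int.emod_def a b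
    rw [h]
    exact dvd_sub (Int.gcd_dvd_left _ _) (Dvd.dvd.mul_right (Int.gcd_dvd_right _ _) _)

lemma neg_one_pow_self_mul (n : ℕ) : ((-1 : ℤ)) ^ n * (-1) ^ n = 1 := by
  rw [← pow_add]
  exact Even.neg_one_pow ⟨n, rfl⟩


lemma f_bij (m t d q : ℕ) (hm : 0 < m) (hd : d = Nat.gcd t m) (hq : q = m / d) :
    Function.Bijective (fun ck : Fin d × Fin q => E m t hm ck.1 ck.2) := by
  have hd0 : 0 < d := hd ▸ Nat.gcd_pos_of_pos_right t hm
  have hdm : d ∣ m := hd ▸ Nat.gcd_dvd_right t m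
  have hdt : d ∣ t := hd ▸ Nat.gcd_dvd_left t m
  have hdq : d * q = m := by rw [hq]; exact Nat.mul_div_cancel' hdm
  have hcop : Nat.Coprime (t / d) q := by
    subst hd hq
    exact Nat.coprime_div_gcd_div_gcd hd0
  have htt' : t / d * d = t := Nat.div_mul_cancel hdt
  have hinj : Function.Injective (fun ck : Fin d × Fin q => E m t hm ck.1 ck.2) := by
    rintro ⟨c, k⟩ ⟨c', k'⟩ hEq
    have hmod : ((c : ℕ) + k * t) % m = ((c' : ℕ) + k' * t) % m := congrArg Fin.val hEq
    have h1 : Nat.ModEq m ((c : ℕ) + k * t) ((c' : ℕ) + k' * t) := hmod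
    have hcc : (c : ℕ) = (c' : ℕ) := by
      have h2 := h1.of_dvd hdm
      have h3 : Nat.ModEq d ((k : ℕ) * t) 0 :=
        (Nat.modEq_zero_iff_dvd).mpr (Dvd.dvd.mul_left hdt k)
      have h4 : Nat.ModEq d ((k' : ℕ) * t) 0 :=
        (Nat.modEq_zero_iff_dvd).mpr (Dvd.dvd.mul_left hdt k')
      have h5 : Nat.ModEq d (c : ℕ) (c' : ℕ) := by
        have := (((Nat.ModEq.refl (c : ℕ)).add h3).symm.trans h2).trans
          ((Nat.ModEq.refl (c' : ℕ)).add h4)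
        simpa using this
      have := h5
      unfold Nat.ModEq at this
      rwa [Nat.mod_eq_of_lt c.isLt, Nat.mod_eq_of_lt c'.isLt] at this
    have hkk : Nat.ModEq m ((k : ℕ) * t) ((k' : ℕ) * t) := by
      apply Nat.ModEq.add_left_cancel' (c : ℕ)
      rwa [hcc] at h1 ⊢
    have hkk2 : Nat.ModEq q ((k : ℕ) * (t / d)) ((k' : ℕ) * (t / d)) := by
      apply Nat.ModEq.mul_right_cancel' (c := d) hd0.ne'
      have e1 : (k : ℕ) * (t / d) * d = (k : ℕ) * t := by rw [mul_assoc, htt']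
      have e2 : (k' : ℕ) * (t / d) * d = (k' : ℕ) * t := by rw [mul_assoc, htt']
      have e3 : q * d = m := by rw [mul_comm]; exact hdq
      rw [e1, e2, e3]
      exact hkk
    have hkq : Nat.ModEq q (k : ℕ) (k' : ℕ) :=
      Nat.ModEq.cancel_right_of_coprime (by rw [Nat.coprime_comm] at hcop; exact hcop) hkk2
    have hkkv : (k : ℕ) = (k' : ℕ) := by
      have := hkq
      unfold Nat.ModEq at this
      rwa [Nat.mod_eq_of_lt k.isLt, Nat.mod_eq_of_lt k'.isLt] at this
    exact Prod.ext (Fin.ext hcc) (Fin.ext hkkv)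
  refine (Fintype.bijective_iff_injective_and_card _).mpr ⟨hinj, ?_⟩
  simp [hdq]
lemma core (m t d q : ℕ) (hm : 0 < m) (ht : t < m) (hd : d = Nat.gcd t m) (hq : q = m / d)
    (R : Type) [CommRing R] (χ : ℤ →+* R) (hs : Function.Surjective χ)
    (hzero : χ (1 + (-1:ℤ)^(q-1)) = 0)
    (hker : ∀ x : ℤ, χ x = 0 → ∃ a : ℤ, x + (1 + (-1:ℤ)^(q-1)) * a = 0) :
    Nonempty (coker (1 + cycMat m ^ t) ≃+ (Fin d → R)) := by
  have hd0 : 0 < d := hd ▸ Nat.gcd_pos_of_pos_right t hm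
  have hdm : d ∣ m := hd ▸ Nat.gcd_dvd_right t m
  have hdt : d ∣ t := hd ▸ Nat.gcd_dvd_left t m
  have hdq : d * q = m := by rw [hq]; exact Nat.mul_div_cancel' hdm
  have hq0 : 0 < q := by
    rcases Nat.eq_zero_or_pos q with h | h
    · subst h; rw [mul_zero] at hdq; omega
    · exact h
  have hq1 : q - 1 + 1 = q := by omega
  have hqt : m ∣ q * t := by
    obtain ⟨t', htt'⟩ := hdt
    exact ⟨t', by rw [htt', ← hdq]; ring⟩
  set e : (Fin d × Fin q) ≃ Fin m :=
    Equiv.ofBijective _ (f_bij m t d q hm hd hq) with he_def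
  have he : ∀ ck : Fin d × Fin q, e ck = E m t hm ck.1 ck.2 := fun _ => rfl
  have hesymm : ∀ (c : Fin d) (k : ℕ) (hk : k < q),
      e.symm (E m t hm c k) = (c, ⟨k, hk⟩) := by
    intro c k hk
    have : E m t hm (c : ℕ) k = e (c, ⟨k, hk⟩) := rfl
    rw [this, Equiv.symm_apply_apply]
  have hrotsymm : ∀ (c k : ℕ), (rot m t hm ht.le).symm (E m t hm c k)
      = E m t hm c (k + (q-1)) := by
    intro c k
    rw [Equiv.symm_apply_eq, rot_E, show k + (q-1) + 1 = k + q from by omega,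
      E_period m t q hm hqt]
  have hmv : ∀ (w : Fin m → ℤ) (i : Fin m), ((1 + cycMat m ^ t).mulVec w) i
      = w i + w ((rot m t hm ht.le).symm i) := by
    intro w i
    rw [Matrix.add_mulVec, Matrix.one_mulVec, Pi.add_apply, mulVec_rot m t hm ht.le w i]
  set Sv : (Fin m → ℤ) → Fin d → ℤ :=
    fun v c => ∑ k ∈ Finset.range q, (-1:ℤ)^k * v (E m t hm c k) with hSv
  set φ : (Fin m → ℤ) →ₗ[ℤ] (Fin d → R) :=
    { toFun := fun v c => χ (Sv v c)
      map_add' := by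
        intro v w
        funext c
        simp only [hSv, Pi.add_apply, mul_add, Finset.sum_add_distrib, map_add]
      map_smul' := by
        intro r v
        funext c
        simp only [hSv, Pi.smul_apply, smul_eq_mul, RingHom.id_apply]
        have : ∑ k ∈ Finset.range q, (-1:ℤ)^k * (r * v (E m t hm c k))
            = r * ∑ k ∈ Finset.range q, (-1:ℤ)^k * v (E m t hm c k) := by
          rw [Finset.mul_sum]
          exact Finset.sum_congr rfl fun k _ => by ring
        rw [this, _root_.map_mul, zsmul_eq_mul, ← eq_intCast χ r] } with hφ
  have hφapp : ∀ v c, φ v c = χ (Sv v c) := fun _ _ => rfl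
  -- h1
  have h1 : ∀ w, φ ((1 + cycMat m ^ t).mulVec w) = 0 := by
    intro w
    funext c
    rw [hφapp]
    set g : ℕ → ℤ := fun k => (-1:ℤ)^k * w (E m t hm c k) with hg
    have hgper : ∀ k, g (k + q) = (-1:ℤ)^q * g k := by
      intro k
      simp only [hg, E_period m t q hm hqt, pow_add]
      ring
    set S : ℤ := ∑ k ∈ Finset.range q, g k with hS
    have key : ∀ k ∈ Finset.range q, (-1:ℤ)^k * ((1 + cycMat m ^ t).mulVec w) (E m t hm c k)
        = g k + (-1:ℤ)^(q-1) * g (k + (q-1)) := by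
      intro k _
      rw [hmv, hrotsymm]
      simp only [hg, pow_add, mul_add]
      have hx := neg_one_pow_self_mul (q-1)
      linear_combination (-((-1:ℤ)^k * w (E m t hm c (k + (q-1))))) * hx
    have step1 : Sv ((1 + cycMat m ^ t).mulVec w) c
        = S + (-1:ℤ)^(q-1) * ∑ k ∈ Finset.range q, g (k + (q-1)) := by
      calc Sv ((1 + cycMat m ^ t).mulVec w) c
          = ∑ k ∈ Finset.range q, (g k + (-1:ℤ)^(q-1) * g (k + (q-1))) :=
            Finset.sum_congr rfl key
        _ = (∑ k ∈ Finset.range q, g k)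
            + (-1:ℤ)^(q-1) * ∑ k ∈ Finset.range q, g (k + (q-1)) := by
            rw [Finset.sum_add_distrib, ← Finset.mul_sum]
        _ = S + (-1:ℤ)^(q-1) * ∑ k ∈ Finset.range q, g (k + (q-1)) := by rw [hS]
    have step2 : ∑ k ∈ Finset.range q, g (k + (q-1))
        = (-1:ℤ)^q * (S - g (q-1)) + g (q-1) := by
      have h5 : ∑ k ∈ Finset.range q, g (k + (q-1))
          = (∑ k ∈ Finset.range (q-1), g ((k+1) + (q-1))) + g (0 + (q-1)) := by
        conv_lhs => rw [← hq1]
        exact Finset.sum_range_succ' (fun k => g (k + (q-1))) (q-1)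
      have h6 : ∀ k ∈ Finset.range (q-1), g ((k+1) + (q-1)) = (-1:ℤ)^q * g k := by
        intro k _
        rw [show (k+1) + (q-1) = k + q from by omega, hgper]
      have h7 : ∑ k ∈ Finset.range (q-1), g k = S - g (q-1) := by
        have : S = (∑ k ∈ Finset.range (q-1), g k) + g (q-1) := by
          rw [hS]
          conv_lhs => rw [← hq1]
          exact Finset.sum_range_succ g (q-1)
        omega
      rw [h5, Finset.sum_congr rfl h6, ← Finset.mul_sum, h7, zero_add]
      
    have hqq : (-1:ℤ)^q = -(-1:ℤ)^(q-1) := by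
      conv_lhs => rw [← hq1]
      rw [pow_succ]
      ring
    have final : Sv ((1 + cycMat m ^ t).mulVec w) c = (1 + (-1:ℤ)^(q-1)) * g (q-1) := by
      rw [step1, step2, hqq]
      linear_combination (g (q-1) - S) * (neg_one_pow_self_mul (q-1))
    rw [final, _root_.map_mul, hzero, zero_mul, Pi.zero_apply]
  -- h2 : surjectivity
  have h2 : Function.Surjective φ := by
    intro u
    choose x hx using fun c => hs (u c)
    set v : Fin m → ℤ :=
      fun i => if ((e.symm i).2 : ℕ) = 0 then x (e.symm i).1 else 0 with hv
    refine ⟨v, ?_⟩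
    funext c
    rw [hφapp]
    have hval : ∀ k ∈ Finset.range q, (-1:ℤ)^k * v (E m t hm c k)
        = if k = 0 then x c else 0 := by
      intro k hk
      have hkq := Finset.mem_range.mp hk
      have hv1 : v (E m t hm c k) = if k = 0 then x c else 0 := by
        show (if ((e.symm (E m t hm c k)).2 : ℕ) = 0 then x (e.symm (E m t hm c k)).1 else 0)
          = if k = 0 then x c else 0
        rw [hesymm c k hkq]
      rw [hv1]
      by_cases h0 : k = 0
      · subst h0; simp
      · simp [h0]
    have hSvc : Sv v c = x c := by
      show (∑ k ∈ Finset.range q, (-1:ℤ)^k * v (E m t hm c k)) = x c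
      rw [Finset.sum_congr rfl hval, Finset.sum_ite_eq' (Finset.range q) 0 (fun _ => x c)]
      simp [Finset.mem_range, hq0]
    rw [hSvc, hx]
  -- h3 : kernel contained in range
  have h3 : ∀ v, φ v = 0 → ∃ w, (1 + cycMat m ^ t).mulVec w = v := by
    intro v hv0
    have hvc : ∀ c : Fin d, χ (Sv v c) = 0 := by
      intro c
      rw [← hφapp, hv0, Pi.zero_apply]
    choose a ha using fun c => hker (Sv v c) (hvc c)
    set W : Fin d → ℕ → ℤ := fun c k =>
      (∑ j ∈ Finset.range (k+1), (-1:ℤ)^(k-j) * v (E m t hm c j)) + (-1:ℤ)^k * a c with hW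
    set w : Fin m → ℤ := fun i => W (e.symm i).1 (e.symm i).2 with hw
    have hwE : ∀ (c : Fin d) (k : ℕ) (hk : k < q), w (E m t hm c k) = W c k := by
      intro c k hk
      show W (e.symm (E m t hm c k)).1 (e.symm (E m t hm c k)).2 = W c k
      rw [hesymm c k hk]
    refine ⟨w, ?_⟩
    funext i
    obtain ⟨⟨c, k⟩, rfl⟩ := (f_bij m t d q hm hd hq).2 i
    show ((1 + cycMat m ^ t).mulVec w) (E m t hm c k) = v (E m t hm c k)
    rw [hmv, hrotsymm]
    obtain ⟨kv, hkq⟩ := k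
    show w (E m t hm c kv) + w (E m t hm c (kv + (q-1))) = v (E m t hm c kv)
    rcases kv with _ | j
    · -- k = 0
      rw [Nat.zero_add, hwE c 0 hq0, hwE c (q-1) (by omega)]
      have hW0 : W c 0 = v (E m t hm c 0) + a c := by
        show (∑ j ∈ Finset.range (0+1), (-1:ℤ)^(0-j) * v (E m t hm c j)) + (-1:ℤ)^0 * a c = _
        rw [Finset.sum_range_one]
        norm_num
      have hsg : ∀ j ∈ Finset.range q, (-1:ℤ)^(q-1-j) * v (E m t hm c j)
          = (-1:ℤ)^(q-1) * ((-1:ℤ)^j * v (E m t hm c j)) := by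
        intro j hj
        have hjq : j ≤ q-1 := by have := Finset.mem_range.mp hj; omega
        have h2j : (-1:ℤ)^(j+j) = 1 := Even.neg_one_pow ⟨j, rfl⟩
        have hkey : (-1:ℤ)^(q-1-j) = (-1:ℤ)^(q-1) * (-1:ℤ)^j := by
          calc (-1:ℤ)^(q-1-j) = (-1:ℤ)^(q-1-j) * (-1:ℤ)^(j+j) := by rw [h2j, mul_one]
            _ = (-1:ℤ)^((q-1-j)+(j+j)) := (pow_add (-1:ℤ) (q-1-j) (j+j)).symm
            _ = (-1:ℤ)^((q-1)+j) := by congr 1; omega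
            _ = (-1:ℤ)^(q-1) * (-1:ℤ)^j := pow_add (-1:ℤ) (q-1) j
        rw [hkey, mul_assoc]
      have hWq : W c (q-1) = (-1:ℤ)^(q-1) * Sv v c + (-1:ℤ)^(q-1) * a c := by
        show (∑ j ∈ Finset.range ((q-1)+1), (-1:ℤ)^(q-1-j) * v (E m t hm c j))
            + (-1:ℤ)^(q-1) * a c = _
        rw [hq1, Finset.sum_congr rfl hsg, ← Finset.mul_sum]
      rw [hW0, hWq]
      have hx := neg_one_pow_self_mul (q-1)
      linear_combination ((-1:ℤ)^(q-1)) * ha c - a c * hx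
    · -- k = j+1
      rw [show (j+1) + (q-1) = j + q from by omega, E_period m t q hm hqt,
        hwE c (j+1) hkq, hwE c j (by omega)]
      have hterm : ∀ i ∈ Finset.range (j+1),
          (-1:ℤ)^(j+1-i) * v (E m t hm c i) = -((-1:ℤ)^(j-i) * v (E m t hm c i)) := by
        intro i hi
        have : j+1-i = (j-i)+1 := by have := Finset.mem_range.mp hi; omega
        rw [this, pow_succ]
        ring
      have hWs : W c (j+1)
          = -(∑ i ∈ Finset.range (j+1), (-1:ℤ)^(j-i) * v (E m t hm c i))
            + v (E m t hm c (j+1)) + (-1:ℤ)^(j+1) * a c := by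
        show (∑ i ∈ Finset.range ((j+1)+1), (-1:ℤ)^(j+1-i) * v (E m t hm c i))
            + (-1:ℤ)^(j+1) * a c = _
        rw [Finset.sum_range_succ, Finset.sum_congr rfl hterm, Finset.sum_neg_distrib]
        norm_num
      have hWj : W c j
          = (∑ i ∈ Finset.range (j+1), (-1:ℤ)^(j-i) * v (E m t hm c i))
            + (-1:ℤ)^j * a c := rfl
      rw [hWs, hWj, pow_succ]
      ring
  exact equiv_of _ φ h1 h2 h3

end Stmt4Aux

theorem stmt_4 (m : ℕ) (hm : 1 ≤ m) (p : ℤ) (d q : ℕ)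
    (hd : d = Int.gcd p m) (hq : q = m / d) :
    (Odd q → Nonempty (coker (1 + cycMatZPow m p) ≃+ (Fin d → ZMod 2))) ∧
    (Even q → Nonempty (coker (1 + cycMatZPow m p) ≃+ (Fin d → ℤ))) := by
  have hm0 : 0 < m := hm
  set t : ℕ := (p % (m : ℤ)).toNat with htdef
  have hmz : (0:ℤ) < (m:ℤ) := by exact_mod_cast hm0
  have hnn : 0 ≤ p % (m:ℤ) := Int.emod_nonneg p hmz.ne'
  have htm : ((t:ℤ)) = p % (m:ℤ) := Int.toNat_of_nonneg hnn
  have ht : t < m := by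
    have h1 : p % (m:ℤ) < (m:ℤ) := Int.emod_lt_of_pos p hmz
    rw [← htm] at h1
    exact_mod_cast h1
  have hgcd : d = Nat.gcd t m := by
    rw [hd, ← Stmt4Aux.gcd_emod_left p (m:ℤ), ← htm, Int.gcd_natCast_natCast]
  have hd0 : 0 < d := hgcd ▸ Nat.gcd_pos_of_pos_right t hm0
  have hdm : d ∣ m := hgcd ▸ Nat.gcd_dvd_right t m
  have hq0 : 0 < q := by rw [hq]; exact Nat.div_pos (Nat.le_of_dvd hm0 hdm) hd0
  constructor
  · intro hodd
    have heven' : Even (q-1) := Nat.Odd.sub_odd hodd odd_one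
    have hpow : (-1:ℤ)^(q-1) = 1 := Even.neg_one_pow heven'
    have hzero : (Int.castRingHom (ZMod 2)) (1 + (-1:ℤ)^(q-1)) = 0 := by
      rw [hpow]
      show ((1 + 1 : ℤ) : ZMod 2) = 0
      rw [show (1:ℤ) + 1 = 2 from rfl]
      rw [show ((2:ℤ) : ZMod 2) = (((2:ℕ):ℤ) : ZMod 2) from by norm_num]
      rw [ZMod.intCast_zmod_eq_zero_iff_dvd]
    have hker : ∀ x : ℤ, (Int.castRingHom (ZMod 2)) x = 0 →
        ∃ a : ℤ, x + (1 + (-1:ℤ)^(q-1)) * a = 0 := by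
      intro x hx
      have hdvd : ((2:ℕ):ℤ) ∣ x := (ZMod.intCast_zmod_eq_zero_iff_dvd x 2).mp hx
      obtain ⟨y, hy⟩ := hdvd
      exact ⟨-y, by rw [hpow, hy]; push_cast; ring⟩
    exact Stmt4Aux.core m t d q hm0 ht hgcd hq (ZMod 2) (Int.castRingHom (ZMod 2))
      ZMod.intCast_surjective hzero hker
  · intro heven
    have hodd' : Odd (q-1) := Nat.Even.sub_odd hq0 heven odd_one
    have hpow : (-1:ℤ)^(q-1) = -1 := Odd.neg_one_pow hodd'
    have hzero : (RingHom.id ℤ) (1 + (-1:ℤ)^(q-1)) = 0 := by rw [hpow]; norm_num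
    have hker : ∀ x : ℤ, (RingHom.id ℤ) x = 0 →
        ∃ a : ℤ, x + (1 + (-1:ℤ)^(q-1)) * a = 0 := by
      intro x hx
      exact ⟨0, by rw [hpow]; simpa using hx⟩
    exact Stmt4Aux.core m t d q hm0 ht hgcd hq ℤ (RingHom.id ℤ)
      Function.surjective_id hzero hker
end

section
/- Let m ≥ 1 be an even integer and f(x), g(x) ∈ ℤ[x]. Then Coker f(X_m) ≅ Coker f(−X_m), and Coker [f(X_m) g(X_m)] ≅ Coker [f(−X_m) g(−X_m)]. -/
open Matrix Polynomial

namespace CycAux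

noncomputable section

variable (m : ℕ)

def D : Matrix (Fin m) (Fin m) ℤ := Matrix.diagonal fun i => (-1) ^ (i : ℕ)

lemma D_mul_D : D m * D m = 1 := by
  rw [D, Matrix.diagonal_mul_diagonal]
  convert Matrix.diagonal_one with i
  rw [← pow_add]
  exact Even.neg_one_pow ⟨i, rfl⟩

lemma D_conj_cycMat (hme : Even m) : D m * cycMat m * D m = -(cycMat m) := by
  obtain ⟨k, hk⟩ := hme
  ext i j
  rw [D, Matrix.mul_diagonal, Matrix.diagonal_mul]
  show (-1 : ℤ) ^ (i : ℕ) * (if ((j : ℕ) + 1) % m = (i : ℕ) then (1:ℤ) else 0) * (-1) ^ (j : ℕ)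
      = -(if ((j : ℕ) + 1) % m = (i : ℕ) then (1:ℤ) else 0)
  split_ifs with h
  · have h2 : ((j : ℕ) + 1) % m % 2 = ((j : ℕ) + 1) % 2 :=
      Nat.mod_mod_of_dvd _ ⟨k, by omega⟩
    have hodd : Odd ((i : ℕ) + (j : ℕ)) := by
      rw [Nat.odd_iff]; omega
    rw [mul_one, ← pow_add]
    rw [hodd.neg_one_pow]
  · ring

def conjHom : Matrix (Fin m) (Fin m) ℤ →ₐ[ℤ] Matrix (Fin m) (Fin m) ℤ where
  toFun M := D m * M * D m
  map_one' := by show D m * 1 * D m = 1; rw [mul_one, D_mul_D]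
  map_mul' M N := by
    have h := D_mul_D m
    calc D m * (M * N) * D m
        = D m * M * (D m * D m) * N * D m := by rw [h]; noncomm_ring
      _ = (D m * M * D m) * (D m * N * D m) := by noncomm_ring
  map_zero' := by simp
  map_add' M N := by noncomm_ring
  commutes' r := by
    simp only [Algebra.algebraMap_eq_smul_one]
    rw [Matrix.mul_smul, mul_one, Matrix.smul_mul, D_mul_D]

def e : (Fin m → ℤ) ≃ₗ[ℤ] (Fin m → ℤ) :=
  LinearEquiv.ofLinear (D m).mulVecLin (D m).mulVecLin
    (by rw [← Matrix.mulVecLin_mul, D_mul_D, Matrix.mulVecLin_one])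
    (by rw [← Matrix.mulVecLin_mul, D_mul_D, Matrix.mulVecLin_one])

lemma range_D_top : LinearMap.range (D m).mulVecLin = ⊤ :=
  LinearMap.range_eq_top.mpr (e m).surjective

lemma range_conj (A : Matrix (Fin m) (Fin m) ℤ) :
    Submodule.map ((e m) : (Fin m → ℤ) →ₗ[ℤ] (Fin m → ℤ)) (LinearMap.range A.mulVecLin)
      = LinearMap.range ((D m * A * D m).mulVecLin) := by
  rw [Matrix.mulVecLin_mul, Matrix.mulVecLin_mul,
    LinearMap.range_comp_of_range_eq_top _ (range_D_top m), LinearMap.range_comp]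
  rfl

lemma range_fromColumns {p n₁ n₂ : Type} [Fintype p] [Fintype n₁] [Fintype n₂]
    (A : Matrix p n₁ ℤ) (B : Matrix p n₂ ℤ) :
    LinearMap.range (Matrix.fromCols A B).mulVecLin
      = LinearMap.range A.mulVecLin ⊔ LinearMap.range B.mulVecLin := by
  ext x
  constructor
  · rintro ⟨v, rfl⟩
    rw [Matrix.mulVecLin_apply, ← Sum.elim_comp_inl_inr v,
      Matrix.fromCols_mulVec_sumElim]
    exact Submodule.add_mem_sup ⟨_, rfl⟩ ⟨_, rfl⟩
  · intro hx
    obtain ⟨a, ⟨u, rfl⟩, b, ⟨w, rfl⟩, rfl⟩ := Submodule.mem_sup.mp hx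
    exact ⟨Sum.elim u w, by rw [Matrix.mulVecLin_apply, Matrix.fromCols_mulVec_sumElim]; rfl⟩

end

end CycAux

theorem stmt_5 (m : ℕ) (hm : 1 ≤ m) (hme : Even m) (f g : Polynomial ℤ) :
    Nonempty (coker (aeval (cycMat m) f) ≃+ coker (aeval (-(cycMat m)) f)) ∧
    Nonempty (coker (Matrix.fromCols (aeval (cycMat m) f) (aeval (cycMat m) g)) ≃+
      coker (Matrix.fromCols (aeval (-(cycMat m)) f) (aeval (-(cycMat m)) g))) := by
  classical
  have key : ∀ h : Polynomial ℤ,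
      aeval (-(cycMat m)) h = CycAux.D m * (aeval (cycMat m) h) * CycAux.D m := by
    intro h
    have := Polynomial.aeval_algHom_apply (CycAux.conjHom m) (cycMat m) h
    rw [show (CycAux.conjHom m) (cycMat m) = -(cycMat m) from CycAux.D_conj_cycMat m hme] at this
    exact this.trans rfl
  constructor
  · rw [key f]
    exact ⟨(Submodule.Quotient.equiv _ _ (CycAux.e m)
      (CycAux.range_conj m _)).toAddEquiv⟩
  · rw [key f, key g]
    refine ⟨(Submodule.Quotient.equiv _ _ (CycAux.e m) ?_).toAddEquiv⟩
    rw [CycAux.range_fromColumns, CycAux.range_fromColumns,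
      ← CycAux.range_conj m, ← CycAux.range_conj m, ← Submodule.map_sup]
end

section
/- Let m ≥ 1 and p be integers and d = gcd(p, m), and let f(x), g(x) ∈ ℤ[x]. Then: (i) the image of the linear map ℤ^m → ℤ^m given by 1_m + X_m^p equals the image of 1_m + X_m^d, and the image of 1_m − X_m^p equals the image of 1_m − X_m^d; (ii) Coker [f(X_m) 1_m − X_m^p] ≅ Coker f(X_d); (iii) Coker [f(X_m) g(X_m) 1_m − X_m^p] ≅ Coker [f(X_d) g(X_d)]. -/
open Matrix Polynomial
open Fin.NatCast

section basics
variable {m : ℕ} [NeZero m]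

lemma cycMat_mulVec_single (i : Fin m) (c : ℤ) :
    cycMat m *ᵥ Pi.single i c = Pi.single ((((i : ℕ) + 1 : ℕ) : Fin m)) c := by
  funext k
  rw [Matrix.mulVec_single]
  have hiff : (((i : ℕ) + 1) % m = (k : ℕ)) ↔ (k = (((i : ℕ) + 1 : ℕ) : Fin m)) := by
    rw [Fin.ext_iff, Fin.val_natCast]; exact eq_comm
  simp only [Pi.smul_apply, Matrix.col_apply, MulOpposite.smul_eq_mul_unop, MulOpposite.unop_op, cycMat, Matrix.of_apply, Pi.single_apply, hiff, ite_mul, one_mul, zero_mul, mul_ite, mul_one, mul_zero]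

lemma cycMat_pow_mulVec_single (a : ℕ) (i : Fin m) (c : ℤ) :
    (cycMat m ^ a) *ᵥ Pi.single i c = Pi.single ((((i : ℕ) + a : ℕ) : Fin m)) c := by
  induction a with
  | zero =>
    rw [pow_zero, Matrix.one_mulVec]
    congr 1
    rw [Nat.add_zero, Fin.cast_val_eq_self]
  | succ n ih =>
    rw [pow_succ', ← Matrix.mulVec_mulVec, ih, cycMat_mulVec_single]
    have hidx : (((((((i : ℕ) + n : ℕ) : Fin m)) : ℕ) + 1 : ℕ) : Fin m)
        = (((i : ℕ) + (n + 1) : ℕ) : Fin m) := by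
      rw [Fin.ext_iff]
      simp only [Fin.val_natCast]
      rw [Nat.mod_add_mod, Nat.add_assoc]
    rw [hidx]

omit [NeZero m] in
lemma matrix_ext_single {n : Type*} [Fintype n] [DecidableEq n]
    {A B : Matrix (Fin m) n ℤ}
    (h : ∀ j : n, A *ᵥ Pi.single j 1 = B *ᵥ Pi.single j 1) : A = B := by
  ext i j
  have := congrFun (h j) i
  simpa using this

lemma cycMat_pow_card : cycMat m ^ m = 1 := by
  apply matrix_ext_single
  intro j
  rw [cycMat_pow_mulVec_single, Matrix.one_mulVec]
  have : ((((j : ℕ) + m : ℕ)) : Fin m) = j :=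
    Fin.ext (by rw [Fin.val_natCast, Nat.add_mod_right]; exact Nat.mod_eq_of_lt j.isLt)
  rw [this]

lemma cycMat_pow_mod (a : ℕ) : cycMat m ^ a = cycMat m ^ (a % m) := by
  conv_lhs => rw [← Nat.div_add_mod a m, pow_add, pow_mul, cycMat_pow_card, one_pow, one_mul]

lemma cycMat_pow_congr {a b : ℕ} (h : a ≡ b [MOD m]) : cycMat m ^ a = cycMat m ^ b := by
  rw [cycMat_pow_mod a, cycMat_pow_mod b, h]

end basics

section nt

lemma NT1 {m q d : ℕ} (hm : 1 ≤ m) (hd : d = Nat.gcd q m) :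
    ∃ e : ℕ, Odd e ∧ d * e ≡ q [MOD m] := by
  have hd0 : 0 < d := hd ▸ Nat.gcd_pos_of_pos_right q hm
  have hdq : d ∣ q := hd ▸ Nat.gcd_dvd_left q m
  have hdm : d ∣ m := hd ▸ Nat.gcd_dvd_right q m
  have hq : d * (q / d) = q := Nat.mul_div_cancel' hdq
  by_cases he : Odd (q / d)
  · exact ⟨q / d, he, by rw [hq]⟩
  · have hcop : Nat.Coprime (q / d) (m / d) := by
      rw [hd] at hd0 ⊢
      exact Nat.coprime_div_gcd_div_gcd hd0
    have hm' : Odd (m / d) := by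
      rcases Nat.even_or_odd (m / d) with h | h
      · exfalso
        rw [Nat.not_odd_iff_even] at he
        have h2 : 2 ∣ Nat.gcd (q / d) (m / d) := Nat.dvd_gcd he.two_dvd h.two_dvd
        rw [hcop] at h2
        omega
      · exact h
    refine ⟨q / d + m / d, ?_, ?_⟩
    · rw [Nat.not_odd_iff_even] at he
      exact he.add_odd hm'
    · rw [Nat.mul_add, hq, Nat.mul_div_cancel' hdm]
      exact (Nat.ModEq.symm ((Nat.modEq_iff_dvd' (Nat.le_add_right q m)).mpr (by simp)))

lemma NT2 {m q d : ℕ} (hm : 1 ≤ m) (hd : d = Nat.gcd q m) :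
    ∃ u : ℕ, Odd u ∧ q * u ≡ d [MOD m] := by
  have hd0 : 0 < d := hd ▸ Nat.gcd_pos_of_pos_right q hm
  have hdq : d ∣ q := hd ▸ Nat.gcd_dvd_left q m
  have hdm : d ∣ m := hd ▸ Nat.gcd_dvd_right q m
  set q' : ℕ := q / d with hq'
  set m' : ℕ := m / d with hm'
  have hqz : (d : ℤ) * q' = q := by exact_mod_cast congrArg (Nat.cast : ℕ → ℤ) (Nat.mul_div_cancel' hdq)
  have hmz : (d : ℤ) * m' = m := by exact_mod_cast congrArg (Nat.cast : ℕ → ℤ) (Nat.mul_div_cancel' hdm)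
  obtain ⟨a, b, hab⟩ : ∃ a b : ℤ, (d : ℤ) = q * a + m * b := by
    refine ⟨Nat.gcdA q m, Nat.gcdB q m, ?_⟩
    rw [hd]; exact_mod_cast Nat.gcd_eq_gcd_ab q m
  have hbez : (1 : ℤ) = q' * a + m' * b := by
    have hd0' : (d : ℤ) ≠ 0 := by exact_mod_cast hd0.ne'
    apply mul_left_cancel₀ hd0'
    rw [mul_one]
    linear_combination hab + (-a) * hqz + (-b) * hmz
  obtain ⟨x, hxodd, hxmod⟩ : ∃ x : ℤ, Odd x ∧ (m : ℤ) ∣ (q * x - d) := by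
    by_cases ha : Odd a
    · exact ⟨a, ha, ⟨-b, by linear_combination -hab⟩⟩
    · rw [Int.not_odd_iff_even] at ha
      have hmodd : Odd (m' : ℤ) := by
        by_contra hme
        rw [Int.not_odd_iff_even] at hme
        have : Even (1 : ℤ) := by
          rw [hbez]
          exact (Even.mul_left ha _).add (Even.mul_right hme _)
        simp [Int.even_iff] at this
      refine ⟨a + m', ha.add_odd hmodd, ⟨q' - b, by linear_combination -hab - (m':ℤ) * hqz + (q':ℤ) * hmz⟩⟩
  have h2m : (0 : ℤ) < 2 * m := by positivity
  set u : ℕ := (x % (2 * m)).toNat with hu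
  have hun : (u : ℤ) = x % (2 * m) := Int.toNat_of_nonneg (Int.emod_nonneg x h2m.ne')
  refine ⟨u, ?_, ?_⟩
  · rw [← Int.odd_coe_nat, hun, Int.odd_iff, Int.emod_emod_of_dvd x ⟨(m : ℤ), by ring⟩,
      ← Int.odd_iff]
    exact hxodd
  · rw [← Int.natCast_modEq_iff]
    push_cast
    have h1 : (u : ℤ) ≡ x [ZMOD (m : ℤ)] := by
      rw [hun]
      exact (Int.emod_emod_of_dvd x ⟨2, by ring⟩ : x % (2 * m) % m = x % m)
    calc (q : ℤ) * u ≡ q * x [ZMOD (m : ℤ)] := h1.mul_left _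
      _ ≡ d [ZMOD (m : ℤ)] := by
          rw [Int.modEq_iff_dvd]
          rw [show (d : ℤ) - q * x = -(q * x - d) by ring]
          exact dvd_neg.mpr hxmod

end nt

section ranges

lemma range_le_of_dvd {n : Type*} [Fintype n] [DecidableEq n] {A B : Matrix n n ℤ}
    (h : A ∣ B) : LinearMap.range B.mulVecLin ≤ LinearMap.range A.mulVecLin := by
  obtain ⟨C, rfl⟩ := h
  rw [Matrix.mulVecLin_mul]
  exact LinearMap.range_comp_le_range _ _

variable {m : ℕ} [NeZero m]

lemma range_sub_le {a b : ℕ} (e : ℕ) (he : b * e ≡ a [MOD m]) :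
    LinearMap.range (1 - cycMat m ^ a).mulVecLin
      ≤ LinearMap.range (1 - cycMat m ^ b).mulVecLin := by
  have h1 : cycMat m ^ a = cycMat m ^ (b * e) := cycMat_pow_congr he.symm
  have hdvd : ((1 : Polynomial ℤ) - X ^ b) ∣ (1 - X ^ (b * e)) := by
    rw [pow_mul, show (1 : Polynomial ℤ) - X ^ b = -(X ^ b - 1) by ring,
      show (1 : Polynomial ℤ) - (X ^ b) ^ e = -((X ^ b) ^ e - 1 ^ e) by ring]
    exact neg_dvd.mpr (dvd_neg.mpr (sub_dvd_pow_sub_pow _ _ e))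
  have h2 := map_dvd (aeval (cycMat m)) hdvd
  simp only [map_sub, _root_.map_one, map_pow, aeval_X] at h2
  rw [h1]
  exact range_le_of_dvd h2

lemma range_add_le {a b : ℕ} (e : ℕ) (hodd : Odd e) (he : b * e ≡ a [MOD m]) :
    LinearMap.range (1 + cycMat m ^ a).mulVecLin
      ≤ LinearMap.range (1 + cycMat m ^ b).mulVecLin := by
  have h1 : cycMat m ^ a = cycMat m ^ (b * e) := cycMat_pow_congr he.symm
  have hdvd : ((1 : Polynomial ℤ) + X ^ b) ∣ (1 + X ^ (b * e)) := by
    rw [pow_mul, add_comm (1 : Polynomial ℤ) (X ^ b),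
      show (1 : Polynomial ℤ) + (X ^ b) ^ e = (X ^ b) ^ e + 1 ^ e by ring]
    exact Odd.add_dvd_pow_add_pow _ _ hodd
  have h2 := map_dvd (aeval (cycMat m)) hdvd
  simp only [map_add, _root_.map_one, map_pow, aeval_X] at h2
  rw [h1]
  exact range_le_of_dvd h2

lemma range_sub_eq {q d : ℕ} (hm : 1 ≤ m) (hd : d = Nat.gcd q m) :
    LinearMap.range (1 - cycMat m ^ q).mulVecLin
      = LinearMap.range (1 - cycMat m ^ d).mulVecLin := by
  obtain ⟨e, -, he⟩ := NT1 hm hd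
  obtain ⟨u, -, hu⟩ := NT2 hm hd
  exact le_antisymm (range_sub_le e he) (range_sub_le u hu)

lemma range_add_eq {q d : ℕ} (hm : 1 ≤ m) (hd : d = Nat.gcd q m) :
    LinearMap.range (1 + cycMat m ^ q).mulVecLin
      = LinearMap.range (1 + cycMat m ^ d).mulVecLin := by
  obtain ⟨e, heo, he⟩ := NT1 hm hd
  obtain ⟨u, huo, hu⟩ := NT2 hm hd
  exact le_antisymm (range_add_le e heo he) (range_add_le u huo hu)

end ranges

section proj

def Pmat (m d : ℕ) : Matrix (Fin d) (Fin m) ℤ :=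
  Matrix.of fun j i => if (i : ℕ) % d = (j : ℕ) then 1 else 0

def Qmat (m d : ℕ) : Matrix (Fin m) (Fin d) ℤ :=
  Matrix.of fun i j => if (i : ℕ) = (j : ℕ) then 1 else 0

variable {m d : ℕ} [NeZero m] [NeZero d]

lemma dpos : 0 < d := Nat.pos_of_ne_zero (NeZero.ne d)

lemma P_mulVec_single (i : Fin m) (c : ℤ) :
    Pmat m d *ᵥ Pi.single i c
      = Pi.single (⟨(i : ℕ) % d, Nat.mod_lt _ dpos⟩ : Fin d) c := by
  funext j
  rw [Matrix.mulVec_single]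
  have hiff : ((i : ℕ) % d = (j : ℕ)) ↔ (j = (⟨(i : ℕ) % d, Nat.mod_lt _ dpos⟩ : Fin d)) := by
    rw [Fin.ext_iff]; exact eq_comm
  simp only [Pi.smul_apply, Matrix.col_apply, MulOpposite.smul_eq_mul_unop, MulOpposite.unop_op, Pmat, Matrix.of_apply, Pi.single_apply, hiff, ite_mul, one_mul, zero_mul, mul_ite, mul_one, mul_zero]

lemma Q_mulVec_single (hdm : d ≤ m) (j : Fin d) (c : ℤ) :
    Qmat m d *ᵥ Pi.single j c = Pi.single (Fin.castLE hdm j) c := by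
  funext k
  rw [Matrix.mulVec_single]
  have hiff : ((k : ℕ) = (j : ℕ)) ↔ (k = Fin.castLE hdm j) := by
    rw [Fin.ext_iff]; simp
  simp only [Pi.smul_apply, Matrix.col_apply, MulOpposite.smul_eq_mul_unop, MulOpposite.unop_op, Qmat, Matrix.of_apply, Pi.single_apply, hiff, ite_mul, one_mul, zero_mul, mul_ite, mul_one, mul_zero]

lemma PQ_eq_one (hdm : d ≤ m) : Pmat m d * Qmat m d = 1 := by
  apply matrix_ext_single
  intro j
  rw [← Matrix.mulVec_mulVec, Q_mulVec_single hdm, P_mulVec_single, Matrix.one_mulVec]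
  have : (⟨((Fin.castLE hdm j : Fin m) : ℕ) % d, Nat.mod_lt _ dpos⟩ : Fin d) = j := by
    apply Fin.ext
    simp [Nat.mod_eq_of_lt j.isLt]
  rw [this]

lemma P_mul_cycMat (hdm : d ∣ m) : Pmat m d * cycMat m = cycMat d * Pmat m d := by
  apply matrix_ext_single
  intro i
  rw [← Matrix.mulVec_mulVec, ← Matrix.mulVec_mulVec, cycMat_mulVec_single,
    P_mulVec_single, P_mulVec_single, cycMat_mulVec_single]
  have : (⟨(((((i : ℕ) + 1 : ℕ)) : Fin m) : ℕ) % d, Nat.mod_lt _ dpos⟩ : Fin d)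
      = ((((⟨(i : ℕ) % d, Nat.mod_lt _ dpos⟩ : Fin d) : ℕ) + 1 : ℕ) : Fin d) := by
    apply Fin.ext
    simp only [Fin.val_natCast]
    rw [Nat.mod_mod_of_dvd _ hdm, Nat.mod_add_mod]
  rw [this]

lemma P_mul_cycMat_pow (hdm : d ∣ m) (a : ℕ) :
    Pmat m d * cycMat m ^ a = cycMat d ^ a * Pmat m d := by
  induction a with
  | zero => simp
  | succ n ih =>
    rw [pow_succ, ← Matrix.mul_assoc, ih, Matrix.mul_assoc, P_mul_cycMat hdm, ← Matrix.mul_assoc, ← pow_succ]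

lemma P_mul_aeval (hdm : d ∣ m) (f : Polynomial ℤ) :
    Pmat m d * aeval (cycMat m) f = aeval (cycMat d) f * Pmat m d := by
  induction f using Polynomial.induction_on' with
  | add p q hp hq => rw [map_add, map_add, Matrix.mul_add, Matrix.add_mul, hp, hq]
  | monomial n c =>
    rw [aeval_monomial, aeval_monomial, Algebra.algebraMap_eq_smul_one,
      Algebra.algebraMap_eq_smul_one, smul_mul_assoc, smul_mul_assoc, one_mul, one_mul,
      Matrix.mul_smul, Matrix.smul_mul, P_mul_cycMat_pow hdm]

lemma P_mul_sub (hdm : d ∣ m) : Pmat m d * (1 - cycMat m ^ d) = 0 := by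
  rw [Matrix.mul_sub, Matrix.mul_one, P_mul_cycMat_pow hdm, cycMat_pow_card, Matrix.one_mul, sub_self]

lemma P_surj (hdm : d ≤ m) : Function.Surjective (Pmat m d).mulVecLin := by
  intro w
  refine ⟨(Qmat m d).mulVec w, ?_⟩
  rw [Matrix.mulVecLin_apply, Matrix.mulVec_mulVec, PQ_eq_one hdm, Matrix.one_mulVec]

end proj

section kern

variable {m d : ℕ} [NeZero m] [NeZero d]

lemma single_sub_mem (hdm : d ∣ m) (i : Fin m) :
    Pi.single i 1 - Pi.single (⟨(i : ℕ) % d, lt_of_le_of_lt (Nat.mod_le _ _) i.isLt⟩ : Fin m) 1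
      ∈ LinearMap.range (1 - cycMat m ^ d).mulVecLin := by
  suffices H : ∀ n : ℕ, ∀ i : Fin m, (i : ℕ) = n →
      Pi.single i 1 - Pi.single (⟨(i : ℕ) % d, lt_of_le_of_lt (Nat.mod_le _ _) i.isLt⟩ : Fin m) 1
        ∈ LinearMap.range (1 - cycMat m ^ d).mulVecLin from H (i : ℕ) i rfl
  intro n
  induction n using Nat.strong_induction_on with
  | _ n IH =>
    intro i hn
    by_cases hlt : (i : ℕ) < d
    · have : (⟨(i : ℕ) % d, lt_of_le_of_lt (Nat.mod_le _ _) i.isLt⟩ : Fin m) = i :=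
        Fin.ext (Nat.mod_eq_of_lt hlt)
      rw [this, sub_self]
      exact Submodule.zero_mem _
    · push_neg at hlt
      set j : Fin m := ⟨(i : ℕ) - d, lt_of_le_of_lt (Nat.sub_le _ _) i.isLt⟩ with hj
      have hd0 : 0 < d := Nat.pos_of_ne_zero (NeZero.ne d)
      have hne : j ≠ i := by
        rw [Ne, Fin.ext_iff]
        simp only [hj]
        omega
      have hji : ((((j : ℕ) + d : ℕ)) : Fin m) = i := by
        apply Fin.ext
        rw [Fin.val_natCast]
        simp only [hj]
        rw [Nat.sub_add_cancel hlt]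
        exact Nat.mod_eq_of_lt i.isLt
      have h1 : (1 - cycMat m ^ d).mulVecLin (Pi.single j (-1))
          = Pi.single i 1 - Pi.single j 1 := by
        rw [Matrix.mulVecLin_apply, Matrix.sub_mulVec, Matrix.one_mulVec,
          cycMat_pow_mulVec_single, hji]
        funext k
        simp only [Pi.sub_apply, Pi.single_apply]
        by_cases h1 : k = j <;> by_cases h2 : k = i <;> simp [h1, h2, hne, Ne.symm hne]
      have hmodeq : (i : ℕ) % d = (j : ℕ) % d := by
        conv_lhs => rw [show (i : ℕ) = (j : ℕ) + d by rw [hj]; simp [Nat.sub_add_cancel hlt]]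
        rw [Nat.add_mod_right]
      have hidx : (⟨(i : ℕ) % d, lt_of_le_of_lt (Nat.mod_le _ _) i.isLt⟩ : Fin m)
          = (⟨(j : ℕ) % d, lt_of_le_of_lt (Nat.mod_le _ _) j.isLt⟩ : Fin m) :=
        Fin.ext hmodeq
      have hsplit : (Pi.single i 1 - Pi.single (⟨(j : ℕ) % d, lt_of_le_of_lt (Nat.mod_le _ _) j.isLt⟩ : Fin m) 1 : Fin m → ℤ)
          = (Pi.single i 1 - Pi.single j 1)
            + (Pi.single j 1 - Pi.single (⟨(j : ℕ) % d, lt_of_le_of_lt (Nat.mod_le _ _) j.isLt⟩ : Fin m) 1) := by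
        abel
      rw [hidx, hsplit]
      refine Submodule.add_mem _ ⟨Pi.single j (-1), h1⟩ (IH (j : ℕ) ?_ j rfl)
      simp only [hj]
      omega

lemma ker_P_eq (hdm : d ∣ m) :
    LinearMap.ker (Pmat m d).mulVecLin = LinearMap.range (1 - cycMat m ^ d).mulVecLin := by
  have hdle : d ≤ m := Nat.le_of_dvd (Nat.pos_of_ne_zero (NeZero.ne m)) hdm
  apply le_antisymm
  · set L : (Fin m → ℤ) →ₗ[ℤ] (Fin m → ℤ) :=
      LinearMap.id - (Qmat m d).mulVecLin ∘ₗ (Pmat m d).mulVecLin with hL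
    have hall : ∀ v, L v ∈ LinearMap.range (1 - cycMat m ^ d).mulVecLin := by
      have htop : ⊤ ≤ Submodule.comap L (LinearMap.range (1 - cycMat m ^ d).mulVecLin) := by
        rw [← (Pi.basisFun ℤ (Fin m)).span_eq, Submodule.span_le]
        rintro _ ⟨i, rfl⟩
        simp only [SetLike.mem_coe, Submodule.mem_comap, hL, LinearMap.sub_apply,
          LinearMap.id_apply, LinearMap.comp_apply, Matrix.mulVecLin_apply,
          Pi.basisFun_apply, P_mulVec_single, Q_mulVec_single hdle]
        have : Fin.castLE hdle (⟨(i : ℕ) % d, Nat.mod_lt _ dpos⟩ : Fin d)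
            = (⟨(i : ℕ) % d, lt_of_le_of_lt (Nat.mod_le _ _) i.isLt⟩ : Fin m) := rfl
        rw [this]
        exact single_sub_mem hdm i
      exact fun v => htop (Submodule.mem_top) 
    intro v hv
    have := hall v
    rw [LinearMap.mem_ker] at hv
    simpa [hL, LinearMap.sub_apply, LinearMap.comp_apply, hv, map_zero] using this
  · rintro _ ⟨w, rfl⟩
    rw [LinearMap.mem_ker, Matrix.mulVecLin_apply, Matrix.mulVecLin_apply,
      Matrix.mulVec_mulVec, P_mul_sub hdm, Matrix.zero_mulVec]

end kern

section assemble

lemma map_ker_bot {R M N : Type*} [CommRing R] [AddCommGroup M] [Module R M]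
    [AddCommGroup N] [Module R N] (π : M →ₗ[R] N) :
    Submodule.map π (LinearMap.ker π) = ⊥ := by
  rw [eq_bot_iff]
  rintro _ ⟨v, hv, rfl⟩
  simpa using hv

lemma quot_addEquiv {R M N : Type*} [CommRing R] [AddCommGroup M] [AddCommGroup N]
    [Module R M] [Module R N]
    (π : M →ₗ[R] N) (hπ : Function.Surjective π) (S : Submodule R M) (T : Submodule R N)
    (hST : S.map π = T) (hker : LinearMap.ker π ≤ S) :
    Nonempty ((M ⧸ S) ≃+ (N ⧸ T)) := by
  have hg : LinearMap.ker (T.mkQ.comp π) = S := by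
    rw [LinearMap.ker_comp, Submodule.ker_mkQ, ← hST, Submodule.comap_map_eq,
      sup_eq_left.mpr hker]
  have hsurj : Function.Surjective (T.mkQ.comp π) := (Submodule.mkQ_surjective T).comp hπ
  exact ⟨((Submodule.quotEquivOfEq S _ hg.symm).trans
    ((T.mkQ.comp π).quotKerEquivOfSurjective hsurj)).toAddEquiv⟩

lemma range_fromColumns {k n1 n2 : Type*} [Fintype k] [Fintype n1] [Fintype n2]
    (A : Matrix k n1 ℤ) (B : Matrix k n2 ℤ) :
    LinearMap.range (Matrix.fromCols A B).mulVecLin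
      = LinearMap.range A.mulVecLin ⊔ LinearMap.range B.mulVecLin := by
  apply le_antisymm
  · rintro _ ⟨u, rfl⟩
    rw [Matrix.mulVecLin_apply]
    have hu : u = Sum.elim (u ∘ Sum.inl) (u ∘ Sum.inr) := by funext x; cases x <;> rfl
    rw [hu, Matrix.fromCols_mulVec_sumElim]
    exact Submodule.add_mem_sup ⟨_, rfl⟩ ⟨_, rfl⟩
  · rw [sup_le_iff]
    constructor
    · rintro _ ⟨u, rfl⟩
      refine ⟨Sum.elim u 0, ?_⟩
      rw [Matrix.mulVecLin_apply, Matrix.fromCols_mulVec_sumElim, Matrix.mulVec_zero,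
        add_zero, Matrix.mulVecLin_apply]
    · rintro _ ⟨u, rfl⟩
      refine ⟨Sum.elim 0 u, ?_⟩
      rw [Matrix.mulVecLin_apply, Matrix.fromCols_mulVec_sumElim, Matrix.mulVec_zero,
        zero_add, Matrix.mulVecLin_apply]

lemma map_range_P {m d : ℕ} [NeZero m] [NeZero d] (hdm : d ∣ m) (f : Polynomial ℤ) :
    Submodule.map (Pmat m d).mulVecLin (LinearMap.range (aeval (cycMat m) f).mulVecLin)
      = LinearMap.range (aeval (cycMat d) f).mulVecLin := by
  have hdle : d ≤ m := Nat.le_of_dvd (Nat.pos_of_ne_zero (NeZero.ne m)) hdm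
  rw [← LinearMap.range_comp, ← Matrix.mulVecLin_mul, P_mul_aeval hdm,
    Matrix.mulVecLin_mul, LinearMap.range_comp,
    LinearMap.range_eq_top.mpr (P_surj hdle), Submodule.map_top]

lemma gcd_emod (p : ℤ) (m : ℕ) (hm : 1 ≤ m) : Int.gcd p m = Nat.gcd (p % (m : ℤ)).toNat m := by
  have hm0 : (m : ℤ) ≠ 0 := by exact_mod_cast (by omega : m ≠ 0)
  have hq : (((p % (m : ℤ)).toNat : ℕ) : ℤ) = p % m := Int.toNat_of_nonneg (Int.emod_nonneg p hm0)
  rw [← Int.gcd_natCast_natCast, hq]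
  apply Nat.dvd_antisymm
  · rw [← Int.natCast_dvd_natCast]
    apply Int.dvd_coe_gcd
    · rw [Int.emod_def]
      exact dvd_sub (Int.gcd_dvd_left _ _) (Dvd.dvd.mul_right (Int.gcd_dvd_right _ _) _)
    · exact Int.gcd_dvd_right _ _
  · rw [← Int.natCast_dvd_natCast]
    apply Int.dvd_coe_gcd
    · conv_rhs => rw [← Int.emod_add_mul_ediv p m]
      exact dvd_add (Int.gcd_dvd_left _ _) (Dvd.dvd.mul_right (Int.gcd_dvd_right _ _) _)
    · exact Int.gcd_dvd_right _ _

end assemble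

theorem stmt_6 (m : ℕ) (hm : 1 ≤ m) (p : ℤ) (d : ℕ) (hd : d = Int.gcd p m)
    (f g : Polynomial ℤ) :
    LinearMap.range (1 + cycMatZPow m p).mulVecLin
      = LinearMap.range (1 + cycMat m ^ d).mulVecLin ∧
    LinearMap.range (1 - cycMatZPow m p).mulVecLin
      = LinearMap.range (1 - cycMat m ^ d).mulVecLin ∧
    Nonempty (coker (Matrix.fromCols (aeval (cycMat m) f) (1 - cycMatZPow m p)) ≃+
      coker (aeval (cycMat d) f)) ∧
    Nonempty (coker (Matrix.fromCols
        (Matrix.fromCols (aeval (cycMat m) f) (aeval (cycMat m) g))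
        (1 - cycMatZPow m p)) ≃+
      coker (Matrix.fromCols (aeval (cycMat d) f) (aeval (cycMat d) g))) := by
  haveI : NeZero m := ⟨by omega⟩
  have hdq : d = Nat.gcd (p % (m : ℤ)).toNat m := by rw [hd, gcd_emod p m hm]
  set q : ℕ := (p % (m : ℤ)).toNat with hqdef
  have hzp : cycMatZPow m p = cycMat m ^ q := rfl
  have hd0 : 0 < d := hdq ▸ Nat.gcd_pos_of_pos_right q hm
  haveI : NeZero d := ⟨hd0.ne'⟩
  have hdm : d ∣ m := hdq ▸ Nat.gcd_dvd_right q m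
  have hdle : d ≤ m := Nat.le_of_dvd hm hdm
  have hkq : LinearMap.ker (Pmat m d).mulVecLin
      = LinearMap.range (1 - cycMat m ^ q).mulVecLin := by
    rw [ker_P_eq hdm, ← range_sub_eq hm hdq]
  refine ⟨by rw [hzp]; exact range_add_eq hm hdq,
    by rw [hzp]; exact range_sub_eq hm hdq, ?_, ?_⟩
  · apply quot_addEquiv (Pmat m d).mulVecLin (P_surj hdle)
    · rw [range_fromColumns, Submodule.map_sup, map_range_P hdm f, hzp, ← hkq,
        map_ker_bot, sup_bot_eq]
    · rw [hkq, hzp, range_fromColumns]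
      exact le_sup_right
  · apply quot_addEquiv (Pmat m d).mulVecLin (P_surj hdle)
    · rw [range_fromColumns, range_fromColumns, range_fromColumns, Submodule.map_sup,
        Submodule.map_sup, map_range_P hdm f, map_range_P hdm g, hzp, ← hkq,
        map_ker_bot, sup_bot_eq]
    · rw [hkq, hzp, range_fromColumns]
      exact le_sup_right
end

section
/- Let m, l ≥ 1 be integers. Then Coker (l·s_m(−X_m)) ≅ ℤ^{m−1} ⊕ ℤ/lℤ, and Coker [s_m(−X_m) l·1_m] ≅ (ℤ/lℤ)^{m−1}. -/
open Matrix Polynomial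

lemma cycMat_apply (m : ℕ) (i j : Fin m) :
    cycMat m i j = if ((j : ℕ) + 1) % m = (i : ℕ) then 1 else 0 := rfl

lemma cycMat_pow (m k : ℕ) (i j : Fin m) :
    (cycMat m ^ k) i j = if ((j : ℕ) + k) % m = (i : ℕ) then 1 else 0 := by
  induction k generalizing i with
  | zero =>
    simp [Matrix.one_apply, Nat.mod_eq_of_lt j.isLt, Fin.ext_iff, eq_comm]
  | succ k ih =>
    rw [pow_succ', Matrix.mul_apply]
    rw [Finset.sum_eq_single_of_mem (⟨((j:ℕ) + k) % m, Nat.mod_lt _ (Fin.pos i)⟩ : Fin m)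
      (Finset.mem_univ _) ?_, ih]
    · rw [if_pos rfl, mul_one, cycMat_apply]
      have h : (((j:ℕ) + k) % m + 1) % m = ((j:ℕ) + (k+1)) % m := by
        rw [Nat.mod_add_mod, Nat.add_assoc]
      simp only [h]
    · intro b _ hb
      rw [ih, if_neg, mul_zero]
      intro hc
      exact hb (by simp [Fin.ext_iff, ← hc])

lemma mod_unique {m i j k : ℕ} (him : i < m) (hk : k < m) :
    (j + k) % m = i ↔ k = (i + m - j % m) % m := by
  have hm : 0 < m := by omega
  have hmpr : (j + (i + m - j % m) % m) % m = i := by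
    rw [Nat.add_mod_mod, ← Nat.mod_add_mod j]
    have : j % m + (i + m - j % m) = i + m := by
      have := Nat.mod_lt j hm; omega
    rw [this, Nat.add_mod_right, Nat.mod_eq_of_lt him]
  constructor
  · intro h
    have hd : (i + m - j % m) % m < m := Nat.mod_lt _ hm
    have : (j + k) % m = (j + (i + m - j % m) % m) % m := by rw [h, hmpr]
    have h2 : k ≡ (i + m - j % m) % m [MOD m] :=
      Nat.ModEq.add_left_cancel' j this
    rw [Nat.ModEq] at h2
    rwa [Nat.mod_eq_of_lt hk, Nat.mod_eq_of_lt hd] at h2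
  · rintro rfl; exact hmpr

lemma sMat_cyc (m : ℕ) (i j : Fin m) :
    sMat m (-(cycMat m)) i j = 1 := by
  have h1 : sMat m (-(cycMat m)) = ∑ k ∈ Finset.range m, cycMat m ^ k := by
    unfold sMat
    refine Finset.sum_congr rfl fun k _ => ?_
    have : (-(cycMat m)) = ((-1 : ℤ)) • cycMat m := by simp
    rw [this, _root_.smul_pow, smul_smul, ← mul_pow]
    norm_num
  rw [h1, Matrix.sum_apply]
  have key : ∀ k ∈ Finset.range m, (cycMat m ^ k) i j =
      if k = ((i : ℕ) + m - (j : ℕ) % m) % m then 1 else 0 := by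
    intro k hk
    rw [cycMat_pow]
    congr 1
    exact propext (mod_unique i.isLt (Finset.mem_range.mp hk))
  rw [Finset.sum_congr rfl key, Finset.sum_ite_eq' (Finset.range m)]
  rw [if_pos (Finset.mem_range.mpr (Nat.mod_lt _ (Fin.pos i)))]

section Main
variable (m l : ℕ)

lemma mem_range1 (hm : 1 ≤ m) (x : Fin m → ℤ) :
    x ∈ LinearMap.range ((l:ℤ) • sMat m (-(cycMat m))).mulVecLin ↔
      ∃ c : ℤ, x = fun _ => (l:ℤ) * c := by
  constructor
  · rintro ⟨v, rfl⟩
    refine ⟨∑ j, v j, funext fun i => ?_⟩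
    rw [Matrix.mulVecLin_apply, Matrix.smul_mulVec]
    simp [Matrix.mulVec, dotProduct, sMat_cyc, Finset.mul_sum]
  · rintro ⟨c, rfl⟩
    refine ⟨fun j => if j = ⟨0, hm⟩ then c else 0, funext fun i => ?_⟩
    rw [Matrix.mulVecLin_apply, Matrix.smul_mulVec]
    simp [Matrix.mulVec, dotProduct, sMat_cyc, mul_ite, mul_zero,
      Finset.sum_ite_eq']

/-- The key linear map for part 1. -/
def fmap (hm : 1 ≤ m) : (Fin m → ℤ) →ₗ[ℤ] ((Fin (m-1) → ℤ) × ZMod l) where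
  toFun x := (fun i => x ⟨i, by have := i.isLt; omega⟩ - x ⟨m-1, by omega⟩,
    ((x ⟨m-1, by omega⟩ : ℤ) : ZMod l))
  map_add' x y := by
    ext i
    · simp; ring
    · simp
  map_smul' c x := by
    ext i
    · simp [mul_sub]
    · simp

lemma ker_fmap (hm : 1 ≤ m) (hl : 1 ≤ l) :
    LinearMap.range ((l:ℤ) • sMat m (-(cycMat m))).mulVecLin =
      LinearMap.ker (fmap m l hm) := by
  haveI : NeZero l := ⟨by omega⟩
  ext x
  rw [mem_range1 m l hm, LinearMap.mem_ker]
  constructor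
  · rintro ⟨c, rfl⟩
    refine Prod.ext_iff.mpr ⟨funext fun i => ?_, ?_⟩
    · simp [fmap]
    · simp only [fmap, LinearMap.coe_mk, AddHom.coe_mk, Prod.snd_zero,
        ZMod.intCast_zmod_eq_zero_iff_dvd]
      exact Dvd.intro c rfl
  · intro h
    rw [Prod.ext_iff] at h
    obtain ⟨h1, h2⟩ := h
    simp only [fmap, LinearMap.coe_mk, AddHom.coe_mk, Prod.fst_zero, Prod.snd_zero] at h1 h2
    rw [ZMod.intCast_zmod_eq_zero_iff_dvd] at h2
    obtain ⟨c, hc⟩ := h2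
    refine ⟨c, funext fun j => ?_⟩
    have hj : x j = x ⟨m-1, by omega⟩ := by
      rcases Nat.lt_or_ge (j : ℕ) (m-1) with h | h
      · have := congrFun h1 ⟨j, h⟩
        simp at this
        omega
      · have : j = ⟨m-1, by omega⟩ := by
          have := j.isLt; simp [Fin.ext_iff]; omega
        rw [this]
    rw [hj, hc]

lemma fmap_surj (hm : 1 ≤ m) : Function.Surjective (fmap m l hm) := by
  rintro ⟨y, z⟩
  obtain ⟨a, ha⟩ := ZMod.intCast_surjective z
  refine ⟨fun j => if h : (j:ℕ) < m-1 then y ⟨j, h⟩ + a else a, ?_⟩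
  have hlast : ¬ (m - 1 < m - 1) := lt_irrefl _
  simp only [fmap, LinearMap.coe_mk, AddHom.coe_mk, hlast, dif_neg, Prod.mk.injEq]
  constructor
  · funext i
    have hi : (i : ℕ) < m - 1 := i.isLt
    simp [hi]
  · exact ha



lemma mem_range2 (hm : 1 ≤ m) (x : Fin m → ℤ) :
    x ∈ LinearMap.range (Matrix.fromCols (sMat m (-(cycMat m)))
        ((l : ℤ) • (1 : Matrix (Fin m) (Fin m) ℤ))).mulVecLin ↔
      ∃ (c : ℤ) (w : Fin m → ℤ), x = fun i => c + (l:ℤ) * w i := by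
  constructor
  · rintro ⟨v, rfl⟩
    refine ⟨∑ j, v (Sum.inl j), v ∘ Sum.inr, funext fun i => ?_⟩
    rw [Matrix.mulVecLin_apply, ← Sum.elim_comp_inl_inr v,
      Matrix.fromCols_mulVec_sumElim, Matrix.smul_mulVec]
    simp [Matrix.mulVec, dotProduct, sMat_cyc]
  · rintro ⟨c, w, rfl⟩
    refine ⟨Sum.elim (fun j => if j = ⟨0, hm⟩ then c else 0) w, funext fun i => ?_⟩
    rw [Matrix.mulVecLin_apply, Matrix.fromCols_mulVec_sumElim,
      Matrix.smul_mulVec]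
    simp [Matrix.mulVec, dotProduct, sMat_cyc, mul_ite, mul_zero,
      Finset.sum_ite_eq']

/-- The key linear map for part 2. -/
def gmap (hm : 1 ≤ m) : (Fin m → ℤ) →ₗ[ℤ] (Fin (m-1) → ZMod l) where
  toFun x := fun i =>
    ((x ⟨i, by have := i.isLt; omega⟩ - x ⟨m-1, by omega⟩ : ℤ) : ZMod l)
  map_add' x y := by
    funext i
    simp only [Pi.add_apply]
    push_cast
    ring
  map_smul' c x := by
    funext i
    simp only [Pi.smul_apply, smul_eq_mul, RingHom.id_apply, zsmul_eq_mul]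
    push_cast
    ring

lemma ker_gmap (hm : 1 ≤ m) (hl : 1 ≤ l) :
    LinearMap.range (Matrix.fromCols (sMat m (-(cycMat m)))
        ((l : ℤ) • (1 : Matrix (Fin m) (Fin m) ℤ))).mulVecLin =
      LinearMap.ker (gmap m l hm) := by
  haveI : NeZero l := ⟨by omega⟩
  ext x
  rw [mem_range2 m l hm, LinearMap.mem_ker]
  constructor
  · rintro ⟨c, w, rfl⟩
    funext i
    simp only [gmap, LinearMap.coe_mk, AddHom.coe_mk, Pi.zero_apply,
      add_sub_add_left_eq_sub, ← mul_sub, ZMod.intCast_zmod_eq_zero_iff_dvd]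
    exact Dvd.intro _ rfl
  · intro h
    have hdvd : ∀ j : Fin m, (l : ℤ) ∣ x j - x ⟨m-1, by omega⟩ := by
      intro j
      rcases Nat.lt_or_ge (j : ℕ) (m-1) with hj | hj
      · have := congrFun h ⟨j, hj⟩
        simp only [gmap, LinearMap.coe_mk, AddHom.coe_mk, Pi.zero_apply,
          ZMod.intCast_zmod_eq_zero_iff_dvd] at this
        have hjj : (⟨((⟨(j:ℕ), hj⟩ : Fin (m-1)) : ℕ), by have := j.isLt; omega⟩ : Fin m) = j :=
          by simp [Fin.ext_iff]
        rwa [hjj] at this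
      · have : j = ⟨m-1, by omega⟩ := by
          have := j.isLt; simp [Fin.ext_iff]; omega
        rw [this]; simp
    refine ⟨x ⟨m-1, by omega⟩, fun j => (x j - x ⟨m-1, by omega⟩) / l,
      funext fun j => ?_⟩
    rw [Int.mul_ediv_cancel' (hdvd j)]
    ring

lemma gmap_surj (hm : 1 ≤ m) : Function.Surjective (gmap m l hm) := by
  intro y
  have ha : ∀ i, ∃ a : ℤ, (a : ZMod l) = y i := fun i => ZMod.intCast_surjective (y i)
  choose a haa using ha
  refine ⟨fun j => if h : (j:ℕ) < m-1 then a ⟨j, h⟩ else 0, funext fun i => ?_⟩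
  have hlast : ¬ (m - 1 < m - 1) := lt_irrefl _
  have hi : (i : ℕ) < m - 1 := i.isLt
  simp only [gmap, LinearMap.coe_mk, AddHom.coe_mk, hlast, dif_neg, hi, dif_pos,
    sub_zero, not_false_iff, dite_eq_ite, if_false]
  have he : (⟨(i:ℕ), hi⟩ : Fin (m-1)) = i := Fin.ext rfl
  rw [he, haa]

theorem stmt_7 (m l : ℕ) (hm : 1 ≤ m) (hl : 1 ≤ l) :
    Nonempty (coker ((l : ℤ) • sMat m (-(cycMat m))) ≃+ ((Fin (m - 1) → ℤ) × ZMod l)) ∧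
    Nonempty (coker (Matrix.fromCols (sMat m (-(cycMat m)))
      ((l : ℤ) • (1 : Matrix (Fin m) (Fin m) ℤ))) ≃+ (Fin (m - 1) → ZMod l)) := by
  constructor
  · exact ⟨((Submodule.quotEquivOfEq _ _ (ker_fmap m l hm hl)).trans
      ((fmap m l hm).quotKerEquivOfSurjective (fmap_surj m l hm))).toAddEquiv⟩
  · exact ⟨((Submodule.quotEquivOfEq _ _ (ker_gmap m l hm hl)).trans
      ((gmap m l hm).quotKerEquivOfSurjective (gmap_surj m l hm))).toAddEquiv⟩
end Main
end

section
/- Let k ≥ 1 be an integer and put d = gcd(12, k). Then Coker ((1_k − X_k)·(1_k + X_k^{3} + X_k^{6} + X_k^{9})) ≅ ℤ ⊕ (ℤ/4ℤ)^{d−1} if d ∈ {1, 3}; ≅ ℤ^{(d+2)/2} ⊕ (ℤ/2ℤ)^{(d−2)/2} if d ∈ {2, 6}; and ≅ ℤ^{(3d+4)/4} if d ∈ {4, 12}. -/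
open Matrix Polynomial

namespace Stmt15

/-- The matrix under study. -/
def MM (m : ℕ) : Matrix (Fin m) (Fin m) ℤ :=
  (1 - cycMat m) * (1 + cycMat m ^ 3 + cycMat m ^ 6 + cycMat m ^ 9)

theorem cycMat_pow (k : ℕ) (hk : 0 < k) (n : ℕ) :
    cycMat k ^ n = Matrix.of (fun i j : Fin k => if ((j : ℕ) + n) % k = (i : ℕ) then 1 else 0) := by
  induction n with
  | zero =>
    ext i j
    simp only [pow_zero, Matrix.of_apply, Nat.add_zero, Nat.mod_eq_of_lt j.isLt,
      Matrix.one_apply, Fin.val_eq_val]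
    exact if_congr eq_comm rfl rfl
  | succ n ih =>
    rw [pow_succ, ih]
    ext i j
    rw [Matrix.mul_apply]
    have hlt : ((j : ℕ) + 1) % k < k := Nat.mod_lt _ hk
    rw [Finset.sum_eq_single (⟨((j : ℕ) + 1) % k, hlt⟩ : Fin k)]
    · have h1 : cycMat k ⟨((j : ℕ) + 1) % k, hlt⟩ j = 1 := by
        simp [cycMat]
      rw [h1, mul_one, Matrix.of_apply, Matrix.of_apply]
      have : (((j : ℕ) + 1) % k + n) % k = ((j : ℕ) + (n + 1)) % k := by
        rw [Nat.mod_add_mod]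
        congr 1
        ring
      rw [this]
    · intro l _ hl
      have : ¬ (((j : ℕ) + 1) % k = (l : ℕ)) := fun h => hl (Fin.ext h.symm)
      simp only [cycMat, Matrix.of_apply, if_neg this, mul_zero]
    · intro h
      exact absurd (Finset.mem_univ _) h

theorem cycMat_pow_mod (k : ℕ) (hk : 0 < k) (n : ℕ) :
    cycMat k ^ n = cycMat k ^ (n % k) := by
  rw [cycMat_pow k hk, cycMat_pow k hk]
  ext i j
  simp only [Matrix.of_apply]
  have : ((j : ℕ) + n % k) % k = ((j : ℕ) + n) % k := by
    conv_rhs => rw [Nat.add_mod]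
    rw [Nat.add_mod (j : ℕ) (n % k), Nat.mod_mod_of_dvd n dvd_rfl]
  rw [this]

/-! ### invariance of the cokernel under invertible row/column operations -/

theorem range_eq_of_right_unit {n : Type} [Fintype n] [DecidableEq n]
    (B V Vi : Matrix n n ℤ) (hV : V * Vi = 1) :
    LinearMap.range (B * V).mulVecLin = LinearMap.range B.mulVecLin := by
  apply le_antisymm
  · rw [Matrix.mulVecLin_mul]
    exact LinearMap.range_comp_le_range _ _
  · intro x hx
    obtain ⟨w, rfl⟩ := hx
    exact ⟨Vi.mulVec w, by
      simp only [Matrix.mulVecLin_apply, Matrix.mulVec_mulVec, Matrix.mul_assoc, hV,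
        Matrix.mul_one]⟩

theorem coker_equiv_UV {n : Type} [Fintype n] [DecidableEq n]
    (A U V Ui Vi D : Matrix n n ℤ) (hU : U * Ui = 1) (hUi : Ui * U = 1)
    (hV : V * Vi = 1) (hD : U * (A * V) = D) :
    Nonempty (coker A ≃+ coker D) := by
  let e : (n → ℤ) ≃ₗ[ℤ] (n → ℤ) :=
    LinearEquiv.ofLinear U.mulVecLin Ui.mulVecLin
      (by rw [← Matrix.mulVecLin_mul, hU, Matrix.mulVecLin_one])
      (by rw [← Matrix.mulVecLin_mul, hUi, Matrix.mulVecLin_one])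
  refine ⟨(Submodule.Quotient.equiv _ _ e ?_).toAddEquiv⟩
  have h1 : LinearMap.range A.mulVecLin = LinearMap.range (A * V).mulVecLin :=
    (range_eq_of_right_unit A V Vi hV).symm
  have hcoe : ∀ x, e x = U.mulVecLin x := fun _ => rfl
  have h2 : Submodule.map (e : (n → ℤ) →ₗ[ℤ] (n → ℤ)) (LinearMap.range (A * V).mulVecLin)
      = LinearMap.range (U * (A * V)).mulVecLin := by
    ext x
    simp only [Submodule.mem_map, LinearMap.mem_range, Matrix.mulVecLin_apply]
    constructor
    · rintro ⟨y, ⟨w, rfl⟩, rfl⟩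
      exact ⟨w, by rw [LinearEquiv.coe_coe, hcoe]; simp [Matrix.mulVecLin_apply, Matrix.mulVec_mulVec]⟩
    · rintro ⟨w, rfl⟩
      exact ⟨(A * V).mulVec w, ⟨w, rfl⟩, by
        rw [LinearEquiv.coe_coe, hcoe]; simp [Matrix.mulVecLin_apply, Matrix.mulVec_mulVec]⟩
  rw [h1, ← hD]
  exact h2

/-! ### cokernel of a diagonal matrix -/

theorem coker_diag (a b q : ℕ) (hq : 0 < q)
    (D : Matrix (Fin (a + b)) (Fin (a + b)) ℤ)
    (hD : D = Matrix.diagonal (fun i : Fin (a + b) => if (i : ℕ) < a then (0 : ℤ) else (q : ℤ))) :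
    Nonempty (coker D ≃+ ((Fin a → ℤ) × (Fin b → ZMod q))) := by
  haveI : NeZero q := ⟨hq.ne'⟩
  let φ : (Fin (a + b) → ℤ) →+ ((Fin a → ℤ) × (Fin b → ZMod q)) :=
    { toFun := fun v => (fun i => v (Fin.castAdd b i), fun j => ((v (Fin.natAdd a j) : ℤ) : ZMod q))
      map_zero' := by ext <;> simp
      map_add' := fun v w => by ext <;> simp }
  let φL : (Fin (a + b) → ℤ) →ₗ[ℤ] ((Fin a → ℤ) × (Fin b → ZMod q)) := φ.toIntLinearMap
  have hsurj : Function.Surjective φL := by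
    rintro ⟨x, y⟩
    refine ⟨Fin.addCases (fun i => x i) (fun j => ((y j).val : ℤ)), ?_⟩
    have h1 : ∀ i : Fin a, (Fin.addCases (fun i => x i) (fun j => ((y j).val : ℤ))
        : Fin (a+b) → ℤ) (Fin.castAdd b i) = x i := fun i => Fin.addCases_left i
    have h2 : ∀ j : Fin b, (Fin.addCases (fun i => x i) (fun j => ((y j).val : ℤ))
        : Fin (a+b) → ℤ) (Fin.natAdd a j) = ((y j).val : ℤ) := fun j => Fin.addCases_right j
    refine Prod.ext (funext fun i => ?_) (funext fun j => ?_)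
    · exact h1 i
    · show (((Fin.addCases _ _ : Fin (a+b) → ℤ) (Fin.natAdd a j) : ℤ) : ZMod q) = y j
      rw [h2 j]
      push_cast
      simp [ZMod.natCast_val, ZMod.cast_id]
  have hker : LinearMap.range D.mulVecLin = LinearMap.ker φL := by
    ext v
    simp only [LinearMap.mem_range, LinearMap.mem_ker, Matrix.mulVecLin_apply]
    constructor
    · rintro ⟨w, rfl⟩
      refine Prod.ext (funext fun i => ?_) (funext fun j => ?_)
      · show (D *ᵥ w) (Fin.castAdd b i) = 0
        rw [hD, Matrix.mulVec_diagonal]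
        simp [Fin.castAdd, i.isLt]
      · show (((D *ᵥ w) (Fin.natAdd a j) : ℤ) : ZMod q) = 0
        rw [hD, Matrix.mulVec_diagonal]
        have : ¬ ((Fin.natAdd a j : Fin (a+b)) : ℕ) < a := by simp
        rw [if_neg this]
        rw [ZMod.intCast_zmod_eq_zero_iff_dvd]
        exact Dvd.intro _ rfl
    · intro hv
      have hv1 : ∀ i : Fin a, v (Fin.castAdd b i) = 0 := fun i => congrFun (congrArg Prod.fst hv) i
      have hv2 : ∀ j : Fin b, (q : ℤ) ∣ v (Fin.natAdd a j) := fun j => by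
        have := congrFun (congrArg Prod.snd hv) j
        exact (ZMod.intCast_zmod_eq_zero_iff_dvd _ q).mp this
      refine ⟨Fin.addCases (fun _ => 0) (fun j => v (Fin.natAdd a j) / q), ?_⟩
      funext i
      rw [hD, Matrix.mulVec_diagonal]
      refine Fin.addCases (fun i => ?_) (fun j => ?_) i
      · rw [if_pos (by simp [i.isLt]), zero_mul, (hv1 i).symm]
      · rw [if_neg (by simp), Fin.addCases_right]
        exact (Int.mul_ediv_cancel' (hv2 j)).trans rfl
  exact ⟨((Submodule.quotEquivOfEq _ _ hker).trans
    (LinearMap.quotKerEquivOfSurjective φL hsurj)).toAddEquiv⟩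

/-! ### the reduction from `k` to `d = gcd 12 k` -/

/-- the "reduction mod d" matrix -/
def Pmat (k d : ℕ) : Matrix (Fin d) (Fin k) ℤ :=
  Matrix.of fun j i => if (i : ℕ) % d = (j : ℕ) then 1 else 0

/-- extension by zero -/
def Qmat (k d : ℕ) : Matrix (Fin k) (Fin d) ℤ :=
  Matrix.of fun i j => if (i : ℕ) = (j : ℕ) then 1 else 0

theorem PQ_eq_one (k d : ℕ) (hdk : d ∣ k) (hk : 0 < k) : Pmat k d * Qmat k d = 1 := by
  ext j j'
  rw [Matrix.mul_apply]
  have hjk : (j' : ℕ) < k := lt_of_lt_of_le j'.isLt (Nat.le_of_dvd hk hdk)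
  rw [Finset.sum_eq_single (⟨(j' : ℕ), hjk⟩ : Fin k)]
  · simp only [Pmat, Qmat, Matrix.of_apply, if_pos rfl, mul_one, Matrix.one_apply,
      Nat.mod_eq_of_lt j'.isLt, Fin.val_eq_val]
    by_cases h : j = j' <;> simp [h, eq_comm]
  · intro l _ hl
    have : ¬ ((l : ℕ) = (j' : ℕ)) := fun h => hl (by simp [Fin.ext_iff, h])
    simp [Qmat, this]
  · intro h; exact absurd (Finset.mem_univ _) h

theorem P_comm (k d : ℕ) (hd : 0 < d) (hdk : d ∣ k) (hk : 0 < k) : Pmat k d * cycMat k = cycMat d * Pmat k d := by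
  ext j i
  rw [Matrix.mul_apply, Matrix.mul_apply]
  rw [Finset.sum_eq_single (⟨((i : ℕ) + 1) % k, Nat.mod_lt _ hk⟩ : Fin k)]
  rotate_left
  · intro l _ hl
    have : ¬ (((i : ℕ) + 1) % k = (l : ℕ)) := fun h => hl (Fin.ext h.symm)
    simp [cycMat, this]
  · intro h; exact absurd (Finset.mem_univ _) h
  rw [Finset.sum_eq_single (⟨(i : ℕ) % d, Nat.mod_lt _ hd⟩ : Fin d)]
  rotate_left
  · intro l _ hl
    have : ¬ ((i : ℕ) % d = (l : ℕ)) := fun h => hl (Fin.ext h.symm)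
    simp [Pmat, this]
  · intro h; exact absurd (Finset.mem_univ _) h
  simp only [Pmat, cycMat, Matrix.of_apply, if_pos rfl, mul_one, one_mul]
  have : (((i : ℕ) + 1) % k) % d = ((i : ℕ) % d + 1) % d := by
    rw [Nat.mod_mod_of_dvd _ hdk, Nat.add_mod (i : ℕ) 1, Nat.add_mod ((i : ℕ) % d) 1,
      Nat.mod_mod_of_dvd _ (dvd_refl d)]
  rw [this]

theorem P_comm_pow (k d : ℕ) (hd : 0 < d) (hdk : d ∣ k) (hk : 0 < k) (n : ℕ) :
    Pmat k d * cycMat k ^ n = cycMat d ^ n * Pmat k d := by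
  induction n with
  | zero => simp
  | succ n ih =>
    rw [pow_succ, ← Matrix.mul_assoc, ih, Matrix.mul_assoc, P_comm k d hd hdk hk,
      ← Matrix.mul_assoc, ← pow_succ]

theorem P_comm_M (k d : ℕ) (hd : 0 < d) (hdk : d ∣ k) (hk : 0 < k) :
    Pmat k d * MM k = MM d * Pmat k d := by
  have hp := P_comm_pow k d hd hdk hk
  unfold MM
  rw [← Matrix.mul_assoc]
  have h1 : Pmat k d * (1 - cycMat k) = (1 - cycMat d) * Pmat k d := by
    rw [Matrix.mul_sub, Matrix.mul_one, Matrix.sub_mul, Matrix.one_mul]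
    congr 1
    simpa using hp 1
  rw [h1, Matrix.mul_assoc]
  have h2 : Pmat k d * (1 + cycMat k ^ 3 + cycMat k ^ 6 + cycMat k ^ 9)
      = (1 + cycMat d ^ 3 + cycMat d ^ 6 + cycMat d ^ 9) * Pmat k d := by
    simp only [Matrix.mul_add, Matrix.add_mul, Matrix.mul_one, Matrix.one_mul, hp 3, hp 6, hp 9]
  rw [h2, ← Matrix.mul_assoc]

theorem M_mul_geom (k : ℕ) :
    MM k * (1 + cycMat k + cycMat k ^ 2) = 1 - cycMat k ^ 12 := by
  unfold MM
  noncomm_ring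

theorem exists_C (k d : ℕ) (hk : 0 < k) (hd : d = Nat.gcd 12 k) :
    ∃ C, cycMat k ^ d - 1 = MM k * C := by
  have hk0 : (0 : ℤ) < (k : ℤ) := by exact_mod_cast hk
  set u : ℤ := Nat.gcdA 12 k with hu
  set v : ℤ := Nat.gcdB 12 k with hv
  have hbez : (d : ℤ) = 12 * u + k * v := by
    rw [hd]; exact_mod_cast Nat.gcd_eq_gcd_ab 12 k
  set a : ℕ := (u % k).toNat with ha
  have ha' : (a : ℤ) = u % k := Int.toNat_of_nonneg (Int.emod_nonneg u hk0.ne')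
  -- 12 * a ≡ d mod k as naturals
  have hmod : (12 * a) % k = d % k := by
    have h1 : ((12 * a : ℕ) : ℤ) % k = ((d : ℕ) : ℤ) % k := by
      push_cast
      rw [ha', hbez]
      conv_lhs => rw [Int.mul_emod, Int.emod_emod_of_dvd _ dvd_rfl, ← Int.mul_emod]
      rw [Int.add_mul_emod_self_left]
    exact_mod_cast h1
  have hpow : cycMat k ^ d = cycMat k ^ (12 * a) := by
    rw [cycMat_pow_mod k hk d, cycMat_pow_mod k hk (12 * a), hmod]
  refine ⟨-((1 + cycMat k + cycMat k ^ 2) * ∑ i ∈ Finset.range a, (cycMat k ^ 12) ^ i), ?_⟩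
  rw [hpow, pow_mul, Matrix.mul_neg, ← Matrix.mul_assoc, M_mul_geom k]
  rw [show (1 - cycMat k ^ 12 : Matrix (Fin k) (Fin k) ℤ) = -(cycMat k ^ 12 - 1) from (neg_sub _ _).symm]
  rw [Matrix.neg_mul, neg_neg, mul_geom_sum]

theorem ker_P_le (k d : ℕ) (hd : 0 < d) (hdk : d ∣ k) (hk : 0 < k) :
    LinearMap.ker (Pmat k d).mulVecLin ≤ LinearMap.range (cycMat k ^ d - 1).mulVecLin := by
  obtain ⟨m, hm⟩ := hdk
  have hm0 : 0 < m := by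
    rcases Nat.eq_zero_or_pos m with h | h
    · subst h; omega
    · exact h
  intro v hv
  rw [LinearMap.mem_ker, Matrix.mulVecLin_apply] at hv
  -- extended vector
  set vv : ℕ → ℤ := fun n => if h : n < k then v ⟨n, h⟩ else 0 with hvv
  -- the class sums vanish
  have hsum : ∀ j : ℕ, j < d → (∑ t ∈ Finset.range m, vv (j + t * d)) = 0 := by
    intro j hj
    have h0 := congrFun hv ⟨j, hj⟩
    rw [Matrix.mulVec, dotProduct] at h0
    simp only [Pmat, Matrix.of_apply, Pi.zero_apply, ite_mul, one_mul, zero_mul] at h0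
    rw [← Finset.sum_filter] at h0
    rw [← h0]
    have hbound : ∀ t, t < m → j + t * d < k := by
      intro t ht
      calc j + t * d < d + t * d := by omega
        _ = (t + 1) * d := by ring
        _ ≤ m * d := Nat.mul_le_mul_right d ht
        _ = k := by rw [hm, Nat.mul_comm]
    refine Finset.sum_nbij' (fun t => (⟨(j + t * d) % k, Nat.mod_lt _ hk⟩ : Fin k))
      (fun i => ((i : ℕ) - j) / d) ?_ ?_ ?_ ?_ ?_
    · intro t ht
      rw [Finset.mem_range] at ht
      simp only [Finset.mem_filter, Finset.mem_univ, true_and]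
      rw [Nat.mod_eq_of_lt (hbound t ht), Nat.add_mul_mod_self_right, Nat.mod_eq_of_lt hj]
    · intro i hi
      simp only [Finset.mem_filter, Finset.mem_univ, true_and] at hi
      rw [Finset.mem_range]
      have h1 : (i : ℕ) = ((i : ℕ) / d) * d + j := by
        conv_lhs => rw [← Nat.div_add_mod (i : ℕ) d]
        rw [hi, Nat.mul_comm]
      have h2 : ((i : ℕ) - j) / d = (i : ℕ) / d := by
        rw [show (i : ℕ) - j = ((i : ℕ) / d) * d by omega, Nat.mul_div_cancel _ hd]
      rw [h2]
      by_contra hcon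
      push_neg at hcon
      have h3 : (i : ℕ) / d * d ≤ (i : ℕ) := Nat.div_mul_le_self _ _
      have h4 : m * d ≤ (i : ℕ) / d * d := Nat.mul_le_mul_right d hcon
      have h5 : (i : ℕ) < d * m := hm ▸ i.isLt
      have h6 : d * m = m * d := Nat.mul_comm d m
      omega
    · intro t ht
      rw [Finset.mem_range] at ht
      dsimp only
      rw [Nat.mod_eq_of_lt (hbound t ht)]
      rw [Nat.add_sub_cancel_left, Nat.mul_div_cancel _ hd]
    · intro i hi
      simp only [Finset.mem_filter, Finset.mem_univ, true_and] at hi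
      have h1 : (i : ℕ) = ((i : ℕ) / d) * d + j := by
        conv_lhs => rw [← Nat.div_add_mod (i : ℕ) d]
        rw [hi, Nat.mul_comm]
      have h2 : ((i : ℕ) - j) / d = (i : ℕ) / d := by
        rw [show (i : ℕ) - j = ((i : ℕ) / d) * d by omega, Nat.mul_div_cancel _ hd]
      apply Fin.ext
      simp only [h2]
      rw [Nat.mod_eq_of_lt (by omega : j + ((i : ℕ) / d) * d < k)]
      omega
    · intro t ht
      rw [Finset.mem_range] at ht
      simp only [hvv]
      rw [dif_pos (hbound t ht)]
      congr 1
      exact Fin.ext (Nat.mod_eq_of_lt (hbound t ht)).symm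
  -- now construct the preimage
  have hdlek : d ≤ k := by
    calc d = d * 1 := (Nat.mul_one d).symm
      _ ≤ d * m := Nat.mul_le_mul_left d hm0
      _ = k := hm.symm
  set w : Fin k → ℤ :=
    fun i => -(∑ t ∈ Finset.range ((i : ℕ) / d + 1), vv ((i : ℕ) % d + t * d)) with hw
  refine ⟨w, ?_⟩
  rw [Matrix.mulVecLin_apply, Matrix.sub_mulVec, Matrix.one_mulVec]
  funext i
  have hl₀lt : ((i : ℕ) + (k - d)) % k < k := Nat.mod_lt _ hk
  set l₀ : Fin k := ⟨((i : ℕ) + (k - d)) % k, hl₀lt⟩ with hl₀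
  have hXw : (cycMat k ^ d *ᵥ w) i = w l₀ := by
    rw [cycMat_pow k hk d, Matrix.mulVec, dotProduct]
    simp only [Matrix.of_apply, ite_mul, one_mul, zero_mul]
    rw [Finset.sum_eq_single l₀]
    · rw [if_pos]
      rw [hl₀]
      show (((i : ℕ) + (k - d)) % k + d) % k = (i : ℕ)
      rw [Nat.mod_add_mod, show (i : ℕ) + (k - d) + d = (i : ℕ) + k by omega,
        Nat.add_mod_right, Nat.mod_eq_of_lt i.isLt]
    · intro l _ hl
      rw [if_neg]
      intro hcon
      apply hl
      apply Fin.ext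
      show (l : ℕ) = ((i : ℕ) + (k - d)) % k
      rw [← hcon, Nat.mod_add_mod, show (l : ℕ) + d + (k - d) = (l : ℕ) + k by omega,
        Nat.add_mod_right, Nat.mod_eq_of_lt l.isLt]
    · intro h; exact absurd (Finset.mem_univ _) h
  rw [Pi.sub_apply, hXw]
  set r := (i : ℕ) % d with hrdef
  set q := (i : ℕ) / d with hqdef
  have hqr : d * q + r = (i : ℕ) := Nat.div_add_mod _ _
  have hr : r < d := Nat.mod_lt _ hd
  have hwi : w i = -(∑ t ∈ Finset.range (q + 1), vv (r + t * d)) := rfl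
  by_cases hcase : d ≤ (i : ℕ)
  · -- i ≥ d
    have hq1 : 1 ≤ q := by
      rcases Nat.eq_zero_or_pos q with h | h
      · rw [h, Nat.mul_zero] at hqr; omega
      · exact h
    have hl₀val : (l₀ : ℕ) = (i : ℕ) - d := by
      rw [hl₀]
      show ((i : ℕ) + (k - d)) % k = (i : ℕ) - d
      rw [show (i : ℕ) + (k - d) = ((i : ℕ) - d) + k by omega, Nat.add_mod_right,
        Nat.mod_eq_of_lt (by omega)]
    have h8 : d * (q - 1) + d = d * q := by
      have h8a : d * 1 ≤ d * q := Nat.mul_le_mul_left d hq1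
      rw [Nat.mul_sub, Nat.mul_one]
      omega
    have h7 : (i : ℕ) - d = d * (q - 1) + r := by omega
    have hmod' : (l₀ : ℕ) % d = r := by
      rw [hl₀val, h7, Nat.mul_add_mod, Nat.mod_eq_of_lt hr]
    have hdiv' : (l₀ : ℕ) / d = q - 1 := by
      rw [hl₀val, h7, Nat.mul_add_div hd, Nat.div_eq_of_lt hr, Nat.add_zero]
    have hwl : w l₀ = -(∑ t ∈ Finset.range q, vv (r + t * d)) := by
      show -(∑ t ∈ Finset.range ((l₀ : ℕ) / d + 1), vv ((l₀ : ℕ) % d + t * d)) = _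
      rw [hmod', hdiv', Nat.sub_add_cancel hq1]
    rw [hwl, hwi, Finset.sum_range_succ]
    have hval : vv (r + q * d) = v i := by
      have hidx : r + q * d = (i : ℕ) := by
        rw [Nat.mul_comm]; omega
      simp only [hvv]
      rw [dif_pos (hidx ▸ i.isLt)]
      congr 1
      exact Fin.ext hidx
    rw [hval]
    ring
  · -- i < d
    push_neg at hcase
    have hrq : r = (i : ℕ) ∧ q = 0 := ⟨Nat.mod_eq_of_lt hcase, Nat.div_eq_of_lt hcase⟩
    have hl₀val : (l₀ : ℕ) = (i : ℕ) + (k - d) := by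
      rw [hl₀]
      show ((i : ℕ) + (k - d)) % k = (i : ℕ) + (k - d)
      exact Nat.mod_eq_of_lt (by omega)
    have h9 : d * (m - 1) + d = d * m := by
      have h9a : d * 1 ≤ d * m := Nat.mul_le_mul_left d hm0
      rw [Nat.mul_sub, Nat.mul_one]
      omega
    have h10 : (i : ℕ) + (k - d) = d * (m - 1) + (i : ℕ) := by omega
    have hmod' : (l₀ : ℕ) % d = (i : ℕ) := by
      rw [hl₀val, h10, Nat.mul_add_mod, Nat.mod_eq_of_lt hcase]
    have hdiv' : (l₀ : ℕ) / d = m - 1 := by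
      rw [hl₀val, h10, Nat.mul_add_div hd, Nat.div_eq_of_lt hcase, Nat.add_zero]
    have hwl : w l₀ = 0 := by
      show -(∑ t ∈ Finset.range ((l₀ : ℕ) / d + 1), vv ((l₀ : ℕ) % d + t * d)) = 0
      rw [hmod', hdiv', Nat.sub_add_cancel hm0, hsum (i : ℕ) hcase, neg_zero]
    have hwi' : w i = -(vv (i : ℕ)) := by
      rw [hwi, hrq.1, hrq.2]
      rw [Finset.sum_range_one, Nat.zero_mul, Nat.add_zero]
    rw [hwl, hwi']
    have : vv (i : ℕ) = v i := by
      simp only [hvv]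
      rw [dif_pos i.isLt]
    rw [this]
    ring

theorem coker_red (k d : ℕ) (hk : 0 < k) (hgcd : Nat.gcd 12 k = d) :
    Nonempty (coker (MM k) ≃+ coker (MM d)) := by
  have hd : 0 < d := hgcd ▸ Nat.gcd_pos_of_pos_left k (by norm_num)
  have hdk : d ∣ k := hgcd ▸ Nat.gcd_dvd_right 12 k
  set π := (Pmat k d).mulVecLin with hπ
  have hPM := P_comm_M k d hd hdk hk
  set R := LinearMap.range (MM d).mulVecLin with hR
  have hle : LinearMap.range (MM k).mulVecLin ≤ LinearMap.ker (R.mkQ ∘ₗ π) := by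
    rintro x ⟨u, rfl⟩
    rw [LinearMap.mem_ker, LinearMap.comp_apply, Submodule.mkQ_apply,
      Submodule.Quotient.mk_eq_zero]
    rw [hπ, Matrix.mulVecLin_apply, Matrix.mulVecLin_apply, Matrix.mulVec_mulVec, hPM,
      ← Matrix.mulVec_mulVec]
    exact ⟨(Pmat k d).mulVec u, rfl⟩
  set φ : coker (MM k) →ₗ[ℤ] coker (MM d) :=
    Submodule.liftQ _ (R.mkQ ∘ₗ π) hle with hφ
  have hsurj : Function.Surjective φ := by
    intro x
    obtain ⟨u, rfl⟩ := Submodule.Quotient.mk_surjective R x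
    refine ⟨Submodule.Quotient.mk ((Qmat k d).mulVec u), ?_⟩
    rw [hφ]
    show Submodule.mkQ R (π ((Qmat k d).mulVec u)) = Submodule.Quotient.mk u
    rw [hπ, Matrix.mulVecLin_apply, Matrix.mulVec_mulVec, PQ_eq_one k d hdk hk,
      Matrix.one_mulVec, Submodule.mkQ_apply]
  have hinj : Function.Injective φ := by
    rw [← LinearMap.ker_eq_bot, LinearMap.ker_eq_bot']
    intro x hx
    obtain ⟨v, rfl⟩ := Submodule.Quotient.mk_surjective _ x
    have h1 : π v ∈ R := by
      have := hx
      rw [hφ] at this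
      rw [← Submodule.Quotient.mk_eq_zero, ← Submodule.mkQ_apply]
      exact this
    obtain ⟨u, hu⟩ := h1
    obtain ⟨C, hC⟩ := exists_C k d hk hgcd.symm
    rw [Submodule.Quotient.mk_eq_zero]
    have h2 : v - (MM k).mulVec ((Qmat k d).mulVec u) ∈ LinearMap.ker π := by
      rw [LinearMap.mem_ker, map_sub]
      have hPQu : Pmat k d *ᵥ (Qmat k d *ᵥ u) = u := by
        rw [Matrix.mulVec_mulVec, PQ_eq_one k d hdk hk, Matrix.one_mulVec]
      have h5 : π ((MM k).mulVec ((Qmat k d).mulVec u)) = (MM d).mulVec u := by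
        rw [hπ, Matrix.mulVecLin_apply, Matrix.mulVec_mulVec, hPM, ← Matrix.mulVec_mulVec, hPQu]
      rw [h5]
      rw [hπ, Matrix.mulVecLin_apply, Matrix.mulVecLin_apply] at hu
      show Pmat k d *ᵥ v - MM d *ᵥ u = 0
      rw [← hu, sub_self]
    have h3 : v - (MM k).mulVec ((Qmat k d).mulVec u)
        ∈ LinearMap.range (MM k).mulVecLin := by
      have h4 := ker_P_le k d hd hdk hk h2
      obtain ⟨z, hz⟩ := h4
      rw [Matrix.mulVecLin_apply, hC, ← Matrix.mulVec_mulVec] at hz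
      exact ⟨C.mulVec z, hz⟩
    obtain ⟨z, hz⟩ := h3
    refine ⟨z + (Qmat k d).mulVec u, ?_⟩
    rw [Matrix.mulVecLin_apply, Matrix.mulVec_add]
    rw [Matrix.mulVecLin_apply] at hz
    rw [hz]
    ring
  exact ⟨(LinearEquiv.ofBijective φ ⟨hinj, hsurj⟩).toAddEquiv⟩

/-! ### the six concrete cases -/

/-- Dropping a trivial second factor. -/
def dropSnd (M N : Type) [AddCommGroup M] [AddCommGroup N] [Subsingleton N] :
    (M × N) ≃+ M where
  toFun p := p.1
  invFun a := (a, 0)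
  left_inv p := by
    cases p with
    | mk a b => simp [Subsingleton.elim (0 : N) b]
  right_inv a := rfl
  map_add' p q := rfl

theorem case1 : Nonempty (coker (MM 1) ≃+ (ℤ × (Fin 0 → ZMod 4))) := by
  obtain ⟨e1⟩ := coker_equiv_UV (MM 1) 1 1 1 1
    (Matrix.diagonal (fun i : Fin (1 + 0) => if (i : ℕ) < 1 then (0 : ℤ) else (4 : ℤ)))
    (by decide) (by decide) (by decide) (by decide)
  obtain ⟨e2⟩ := coker_diag 1 0 4 (by norm_num) _ rfl
  exact ⟨(e1.trans e2).trans
    (AddEquiv.prodCongr (LinearEquiv.funUnique (Fin 1) ℤ ℤ).toAddEquiv (AddEquiv.refl _))⟩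

theorem case2 : Nonempty (coker (MM 2) ≃+ ((Fin 2 → ℤ) × (Fin 0 → ZMod 2))) := by
  obtain ⟨e1⟩ := coker_equiv_UV (MM 2) 1 1 1 1
    (Matrix.diagonal (fun i : Fin (2 + 0) => if (i : ℕ) < 2 then (0 : ℤ) else (2 : ℤ)))
    (by decide) (by decide) (by decide) (by decide)
  obtain ⟨e2⟩ := coker_diag 2 0 2 (by norm_num) _ rfl
  exact ⟨e1.trans e2⟩

theorem case3 : Nonempty (coker (MM 3) ≃+ (ℤ × (Fin 2 → ZMod 4))) := by
  obtain ⟨e1⟩ := coker_equiv_UV (MM 3)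
    !![1, 1, 1; 1, 0, 0; 1, 1, 0] !![1, 1, 0; 1, 0, 1; 1, 0, 0]
    !![0, 1, 0; 0, -1, 1; 1, 0, -1] !![0, 0, 1; 1, 0, -1; 0, 1, -1]
    (Matrix.diagonal (fun i : Fin (1 + 2) => if (i : ℕ) < 1 then (0 : ℤ) else (4 : ℤ)))
    (by decide) (by decide) (by decide) (by decide)
  obtain ⟨e2⟩ := coker_diag 1 2 4 (by norm_num) _ rfl
  exact ⟨(e1.trans e2).trans
    (AddEquiv.prodCongr (LinearEquiv.funUnique (Fin 1) ℤ ℤ).toAddEquiv (AddEquiv.refl _))⟩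

theorem case4 : Nonempty (coker (MM 4) ≃+ (Fin 4 → ℤ)) := by
  obtain ⟨e1⟩ := coker_equiv_UV (MM 4) 1 1 1 1
    (Matrix.diagonal (fun i : Fin (4 + 0) => if (i : ℕ) < 4 then (0 : ℤ) else (1 : ℤ)))
    (by decide) (by decide) (by decide) (by decide)
  obtain ⟨e2⟩ := coker_diag 4 0 1 (by norm_num) _ rfl
  exact ⟨(e1.trans e2).trans (dropSnd _ _)⟩

theorem case6 : Nonempty (coker (MM 6) ≃+ ((Fin 4 → ℤ) × (Fin 2 → ZMod 2))) := by
  obtain ⟨e1⟩ := coker_equiv_UV (MM 6)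
    !![1, 1, 1, 0, 0, 0;
       -1, 0, 0, 1, 0, 0;
       0, -1, 0, 0, 1, 0;
       1, 1, 0, 0, 0, 1;
       1, 0, 0, 0, 0, 0;
       1, 1, 0, 0, 0, 0]
    !![1, -1, 0, 1, 1, 0;
       1, 0, -1, 1, 0, 1;
       1, 0, 0, 0, 0, 0;
       0, 1, 0, 0, 0, 0;
       0, 0, 1, 0, 0, 0;
       0, 0, 0, 1, 0, 0]
    !![0, 0, 0, 0, 1, 0;
       0, 0, 0, 0, -1, 1;
       1, 0, 0, 0, 0, -1;
       0, 1, 0, 0, 1, 0;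
       0, 0, 1, 0, -1, 1;
       0, 0, 0, 1, 0, -1]
    !![0, 0, 1, 0, 0, 0;
       0, 0, 0, 1, 0, 0;
       0, 0, 0, 0, 1, 0;
       0, 0, 0, 0, 0, 1;
       1, 0, -1, 1, 0, -1;
       0, 1, -1, 0, 1, -1]
    (Matrix.diagonal (fun i : Fin (4 + 2) => if (i : ℕ) < 4 then (0 : ℤ) else (2 : ℤ)))
    (by decide) (by decide) (by decide) (by decide)
  obtain ⟨e2⟩ := coker_diag 4 2 2 (by norm_num) _ rfl
  exact ⟨e1.trans e2⟩

theorem case12 : Nonempty (coker (MM 12) ≃+ (Fin 10 → ℤ)) := by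
  obtain ⟨e1⟩ := coker_equiv_UV (MM 12)
    !![1, 1, 1, 0, 0, 0, 0, 0, 0, 0, 0, 0;
       -1, 0, 0, 1, 0, 0, 0, 0, 0, 0, 0, 0;
       0, -1, 0, 0, 1, 0, 0, 0, 0, 0, 0, 0;
       1, 1, 0, 0, 0, 1, 0, 0, 0, 0, 0, 0;
       -1, 0, 0, 0, 0, 0, 1, 0, 0, 0, 0, 0;
       0, -1, 0, 0, 0, 0, 0, 1, 0, 0, 0, 0;
       1, 1, 0, 0, 0, 0, 0, 0, 1, 0, 0, 0;
       -1, 0, 0, 0, 0, 0, 0, 0, 0, 1, 0, 0;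
       0, -1, 0, 0, 0, 0, 0, 0, 0, 0, 1, 0;
       1, 1, 0, 0, 0, 0, 0, 0, 0, 0, 0, 1;
       1, 0, 0, 0, 0, 0, 0, 0, 0, 0, 0, 0;
       1, 1, 0, 0, 0, 0, 0, 0, 0, 0, 0, 0]
    !![1, -1, 0, 1, -1, 0, 1, -1, 0, 1, 1, 0;
       1, 0, -1, 1, 0, -1, 1, 0, -1, 1, 0, 1;
       1, 0, 0, 0, 0, 0, 0, 0, 0, 0, 0, 0;
       0, 1, 0, 0, 0, 0, 0, 0, 0, 0, 0, 0;
       0, 0, 1, 0, 0, 0, 0, 0, 0, 0, 0, 0;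
       0, 0, 0, 1, 0, 0, 0, 0, 0, 0, 0, 0;
       0, 0, 0, 0, 1, 0, 0, 0, 0, 0, 0, 0;
       0, 0, 0, 0, 0, 1, 0, 0, 0, 0, 0, 0;
       0, 0, 0, 0, 0, 0, 1, 0, 0, 0, 0, 0;
       0, 0, 0, 0, 0, 0, 0, 1, 0, 0, 0, 0;
       0, 0, 0, 0, 0, 0, 0, 0, 1, 0, 0, 0;
       0, 0, 0, 0, 0, 0, 0, 0, 0, 1, 0, 0]
    !![0, 0, 0, 0, 0, 0, 0, 0, 0, 0, 1, 0;
       0, 0, 0, 0, 0, 0, 0, 0, 0, 0, -1, 1;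
       1, 0, 0, 0, 0, 0, 0, 0, 0, 0, 0, -1;
       0, 1, 0, 0, 0, 0, 0, 0, 0, 0, 1, 0;
       0, 0, 1, 0, 0, 0, 0, 0, 0, 0, -1, 1;
       0, 0, 0, 1, 0, 0, 0, 0, 0, 0, 0, -1;
       0, 0, 0, 0, 1, 0, 0, 0, 0, 0, 1, 0;
       0, 0, 0, 0, 0, 1, 0, 0, 0, 0, -1, 1;
       0, 0, 0, 0, 0, 0, 1, 0, 0, 0, 0, -1;
       0, 0, 0, 0, 0, 0, 0, 1, 0, 0, 1, 0;
       0, 0, 0, 0, 0, 0, 0, 0, 1, 0, -1, 1;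
       0, 0, 0, 0, 0, 0, 0, 0, 0, 1, 0, -1]
    !![0, 0, 1, 0, 0, 0, 0, 0, 0, 0, 0, 0;
       0, 0, 0, 1, 0, 0, 0, 0, 0, 0, 0, 0;
       0, 0, 0, 0, 1, 0, 0, 0, 0, 0, 0, 0;
       0, 0, 0, 0, 0, 1, 0, 0, 0, 0, 0, 0;
       0, 0, 0, 0, 0, 0, 1, 0, 0, 0, 0, 0;
       0, 0, 0, 0, 0, 0, 0, 1, 0, 0, 0, 0;
       0, 0, 0, 0, 0, 0, 0, 0, 1, 0, 0, 0;
       0, 0, 0, 0, 0, 0, 0, 0, 0, 1, 0, 0;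
       0, 0, 0, 0, 0, 0, 0, 0, 0, 0, 1, 0;
       0, 0, 0, 0, 0, 0, 0, 0, 0, 0, 0, 1;
       1, 0, -1, 1, 0, -1, 1, 0, -1, 1, 0, -1;
       0, 1, -1, 0, 1, -1, 0, 1, -1, 0, 1, -1]
    (Matrix.diagonal (fun i : Fin (10 + 2) => if (i : ℕ) < 10 then (0 : ℤ) else (1 : ℤ)))
    (by decide) (by decide) (by decide) (by decide)
  obtain ⟨e2⟩ := coker_diag 10 2 1 (by norm_num) _ rfl
  exact ⟨(e1.trans e2).trans (dropSnd _ _)⟩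

end Stmt15

open Stmt15 in
theorem stmt_15 (k : ℕ) (hk : 1 ≤ k) (d : ℕ) (hd : d = Nat.gcd 12 k) :
    (d = 1 ∨ d = 3 → Nonempty (coker ((1 - cycMat k) * (1 + cycMat k ^ 3 + cycMat k ^ 6 + cycMat k ^ 9)) ≃+ (ℤ × (Fin (d - 1) → ZMod 4)))) ∧
    (d = 2 ∨ d = 6 → Nonempty (coker ((1 - cycMat k) * (1 + cycMat k ^ 3 + cycMat k ^ 6 + cycMat k ^ 9)) ≃+
      ((Fin ((d + 2) / 2) → ℤ) × (Fin ((d - 2) / 2) → ZMod 2)))) ∧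
    (d = 4 ∨ d = 12 → Nonempty (coker ((1 - cycMat k) * (1 + cycMat k ^ 3 + cycMat k ^ 6 + cycMat k ^ 9)) ≃+ (Fin ((3 * d + 4) / 4) → ℤ))) := by
  have hk0 : 0 < k := hk
  refine ⟨?_, ?_, ?_⟩
  · rintro (h | h) <;> subst h
    · obtain ⟨e1⟩ := coker_red k 1 hk0 hd.symm
      obtain ⟨e2⟩ := case1
      exact ⟨e1.trans e2⟩
    · obtain ⟨e1⟩ := coker_red k 3 hk0 hd.symm
      obtain ⟨e2⟩ := case3
      exact ⟨e1.trans e2⟩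
  · rintro (h | h) <;> subst h
    · obtain ⟨e1⟩ := coker_red k 2 hk0 hd.symm
      obtain ⟨e2⟩ := case2
      exact ⟨e1.trans e2⟩
    · obtain ⟨e1⟩ := coker_red k 6 hk0 hd.symm
      obtain ⟨e2⟩ := case6
      exact ⟨e1.trans e2⟩
  · rintro (h | h) <;> subst h
    · obtain ⟨e1⟩ := coker_red k 4 hk0 hd.symm
      obtain ⟨e2⟩ := case4
      exact ⟨e1.trans e2⟩
    · obtain ⟨e1⟩ := coker_red k 12 hk0 hd.symm
      obtain ⟨e2⟩ := case12
      exact ⟨e1.trans e2⟩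
end
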